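/- arXiv:1205.2761 — 8 statements merged into one kernel-verified Lean document; each statement's English description precedes it below -/
import Mathlib

section
/- Let m ≥ 1, let ε ≥ 0, and let ψ, φ ∈ ℂ^m ⊗ ℂ³ be unit vectors given in the decomposed form ψ = Σ_{i<m} α_i e_i ⊗ (Σ_{j<3} β_{i,j} f_j), φ = Σ_{i<m} α'_i e_i ⊗ (Σ_{j<3} β'_{i,j} f_j), with Σ_i |α_i|² = Σ_i |α'_i|² = 1 and Σ_j |β_{i,j}|² = Σ_j |β'_{i,j}|² = 1 for every i. If ½(1 + |⟨ψ, φ⟩|²) ≥ 1 − ε (i.e. the SWAP-test on ψ and φ succeeds with probability at least 1 − ε), then for every k < m and every ℓ < 3, | |α_k β_{k,ℓ}|² − |α'_k β'_{k,ℓ}|² | ≤ √(8ε). -/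
/-- **Lemma (SWAP-test closeness of outcome distributions).**
If the SWAP-test on the decomposed unit vectors
`ψ = Σ_i α_i e_i ⊗ (Σ_j β_{i,j} f_j)` and `φ = Σ_i α'_i e_i ⊗ (Σ_j β'_{i,j} f_j)`
succeeds with probability at least `1 − ε`, then for all `k, ℓ`,
`| |α_k β_{k,ℓ}|² − |α'_k β'_{k,ℓ}|² | ≤ √(8ε)`. -/
theorem swap_test_close_distributions (m : ℕ) (hm : 1 ≤ m) (ε : ℝ) (hε : 0 ≤ ε)
    (α α' : Fin m → ℂ) (β β' : Fin m → Fin 3 → ℂ)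
    (hα : ∑ i, ‖α i‖ ^ 2 = 1)
    (hα' : ∑ i, ‖α' i‖ ^ 2 = 1)
    (hβ : ∀ i, ∑ j, ‖β i j‖ ^ 2 = 1)
    (hβ' : ∀ i, ∑ j, ‖β' i j‖ ^ 2 = 1)
    (hswap : (1 / 2 : ℝ) * (1 + ‖
        (∑ i, ∑ j, (starRingEnd ℂ) (α i * β i j) * (α' i * β' i j))‖ ^ 2)
      ≥ 1 - ε) :
    ∀ (k : Fin m) (ℓ : Fin 3),
      |‖α k * β k ℓ‖ ^ 2 - ‖α' k * β' k ℓ‖ ^ 2|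
        ≤ Real.sqrt (8 * ε) := by
  intro k ℓ
  set A : Fin m → Fin 3 → ℝ := fun i j => ‖α i * β i j‖ with hA
  set B : Fin m → Fin 3 → ℝ := fun i j => ‖α' i * β' i j‖ with hB
  have hAnn : ∀ i j, 0 ≤ A i j := fun i j => norm_nonneg _
  have hBnn : ∀ i j, 0 ≤ B i j := fun i j => norm_nonneg _
  have hAsum : ∑ i, ∑ j, A i j ^ 2 = 1 := by
    have : ∀ i, ∑ j, A i j ^ 2 = ‖α i‖ ^ 2 := by
      intro i
      simp only [hA, map_mul, norm_mul, mul_pow, ← Finset.mul_sum, hβ i, mul_one]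
    simp_rw [this]; exact hα
  have hBsum : ∑ i, ∑ j, B i j ^ 2 = 1 := by
    have : ∀ i, ∑ j, B i j ^ 2 = ‖α' i‖ ^ 2 := by
      intro i
      simp only [hB, map_mul, norm_mul, mul_pow, ← Finset.mul_sum, hβ' i, mul_one]
    simp_rw [this]; exact hα'
  set F : ℝ := ‖∑ i, ∑ j, (starRingEnd ℂ) (α i * β i j) * (α' i * β' i j)‖ with hF
  set S : ℝ := ∑ i, ∑ j, A i j * B i j with hS
  have hSnn : 0 ≤ S :=
    Finset.sum_nonneg fun i _ => Finset.sum_nonneg fun j _ => mul_nonneg (hAnn i j) (hBnn i j)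
  have hFS : F ≤ S := by
    calc F ≤ ∑ i, ‖∑ j, (starRingEnd ℂ) (α i * β i j) * (α' i * β' i j)‖ := by
          exact norm_sum_le _ _
      _ ≤ ∑ i, ∑ j, ‖(starRingEnd ℂ) (α i * β i j) * (α' i * β' i j)‖ :=
          Finset.sum_le_sum fun i _ => norm_sum_le _ _
      _ = S := by
          simp only [hS, hA, hB, map_mul, norm_mul, Complex.norm_conj]
  have hF2 : 1 - 2 * ε ≤ F ^ 2 := by linarith
  have hS2 : 1 - 2 * ε ≤ S ^ 2 :=
    le_trans hF2 (pow_le_pow_left₀ (norm_nonneg _) hFS 2)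
  have hsingle : ∀ (f : Fin m → Fin 3 → ℝ), (∀ i j, 0 ≤ f i j) →
      f k ℓ ≤ ∑ i, ∑ j, f i j := by
    intro f hf
    calc f k ℓ ≤ ∑ j, f k j :=
          Finset.single_le_sum (fun j _ => hf k j) (Finset.mem_univ ℓ)
      _ ≤ ∑ i, ∑ j, f i j :=
          Finset.single_le_sum (fun i _ => Finset.sum_nonneg fun j _ => hf i j)
            (Finset.mem_univ k)
  have expand1 : ∑ i, ∑ j, (A i j - B i j) ^ 2 = 2 - 2 * S := by
    have h : ∀ i j, (A i j - B i j) ^ 2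
        = A i j ^ 2 + B i j ^ 2 - 2 * (A i j * B i j) := fun i j => by ring
    simp_rw [h, Finset.sum_sub_distrib, Finset.sum_add_distrib, ← Finset.mul_sum]
    rw [hAsum, hBsum]; ring
  have expand2 : ∑ i, ∑ j, (A i j + B i j) ^ 2 = 2 + 2 * S := by
    have h : ∀ i j, (A i j + B i j) ^ 2
        = A i j ^ 2 + B i j ^ 2 + 2 * (A i j * B i j) := fun i j => by ring
    simp_rw [h, Finset.sum_add_distrib, ← Finset.mul_sum]
    rw [hAsum, hBsum]; ring
  have h1 : (A k ℓ - B k ℓ) ^ 2 ≤ 2 - 2 * S := by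
    rw [← expand1]; exact hsingle (fun i j => (A i j - B i j) ^ 2) (fun i j => sq_nonneg _)
  have h2 : (A k ℓ + B k ℓ) ^ 2 ≤ 2 + 2 * S := by
    rw [← expand2]; exact hsingle (fun i j => (A i j + B i j) ^ 2) (fun i j => sq_nonneg _)
  have key : |A k ℓ ^ 2 - B k ℓ ^ 2| ^ 2 ≤ 8 * ε := by
    have : |A k ℓ ^ 2 - B k ℓ ^ 2| ^ 2 = (A k ℓ - B k ℓ) ^ 2 * (A k ℓ + B k ℓ) ^ 2 := by
      rw [sq_abs]; ring
    rw [this]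
    have hprod : (A k ℓ - B k ℓ) ^ 2 * (A k ℓ + B k ℓ) ^ 2 ≤ (2 - 2 * S) * (2 + 2 * S) :=
      mul_le_mul h1 h2 (sq_nonneg _) (le_trans (sq_nonneg _) h1)
    nlinarith [hS2]
  have := Real.sqrt_le_sqrt key
  rwa [Real.sqrt_sq (abs_nonneg _)] at this
end

section
/- Let m ≥ 1 and set ε = 10⁻¹⁰ · m⁻². Let ψ, φ ∈ ℂ^m ⊗ ℂ³ be unit vectors in decomposed form with amplitudes (α_i, β_{i,j}) and (α'_i, β'_{i,j}) respectively. Suppose that the equality-test rejection probability R_eq = 1 − ½(1 + |⟨ψ, φ⟩|²) satisfies R_eq ≤ ε, and that the same-vertex rejection probability R_sv = Σ_{i<m} Σ_{j≠j', j,j'<3} |α_i|² |β_{i,j}|² |α'_i|² |β'_{i,j'}|² satisfies R_sv ≤ ε. Then for every i < m with |α_i|² ≥ 1/(100m) there exists j < 3 with |β_{i,j}|² ≥ 9/10. -/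
set_option maxHeartbeats 1000000


/-- **Lemma (well-defined colors).**
Set `ε = 10⁻¹⁰ m⁻²`. If the equality-test rejection probability
`R_eq = 1 − ½(1 + |⟨ψ, φ⟩|²)` and the same-vertex rejection probability
`R_sv = Σ_i Σ_{j ≠ j'} |α_i|²|β_{i,j}|²|α'_i|²|β'_{i,j'}|²`
are both at most `ε`, then every vertex `i` with `|α_i|² ≥ 1/(100m)` has a
well-defined color: some `j` with `|β_{i,j}|² ≥ 9/10`. -/
theorem well_defined_colors (m : ℕ) (hm : 1 ≤ m)
    (α α' : Fin m → ℂ) (β β' : Fin m → Fin 3 → ℂ)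
    (hα : ∑ i, ‖α i‖ ^ 2 = 1)
    (hα' : ∑ i, ‖α' i‖ ^ 2 = 1)
    (hβ : ∀ i, ∑ j, ‖β i j‖ ^ 2 = 1)
    (hβ' : ∀ i, ∑ j, ‖β' i j‖ ^ 2 = 1)
    (hReq : 1 - (1 / 2 : ℝ) * (1 + ‖
        (∑ i, ∑ j, (starRingEnd ℂ) (α i * β i j) * (α' i * β' i j))‖ ^ 2)
      ≤ 1 / (10 ^ 10 * (m : ℝ) ^ 2))
    (hRsv : ∑ i, ∑ j, ∑ j', (if j = j' then 0 else
        ‖α i‖ ^ 2 * ‖β i j‖ ^ 2 *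
          ‖α' i‖ ^ 2 * ‖β' i j'‖ ^ 2)
      ≤ 1 / (10 ^ 10 * (m : ℝ) ^ 2)) :
    ∀ i : Fin m, ‖α i‖ ^ 2 ≥ 1 / (100 * (m : ℝ)) →
      ∃ j : Fin 3, ‖β i j‖ ^ 2 ≥ 9 / 10 := by
  intro i₀ ha
  by_contra hcon
  push_neg at hcon
  have hM1 : (1:ℝ) ≤ (m:ℝ) := by exact_mod_cast hm
  have hMpos : (0:ℝ) < (m:ℝ) := by linarith
  set M : ℝ := (m:ℝ) with hMdef
  set ε : ℝ := 1 / (10 ^ 10 * M ^ 2) with hεdef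
  set t : ℝ := 1 / (10 ^ 5 * M) with htdef
  have htpos : 0 < t := by positivity
  have hεt : ε = t ^ 2 := by
    rw [hεdef, htdef]; field_simp
  have hεsmall : ε ≤ 1 / 10 ^ 10 := by
    rw [hεdef]
    have : (1:ℝ) ≤ M ^ 2 := by nlinarith
    rw [div_le_div_iff₀ (by positivity) (by positivity)]
    nlinarith
  -- the inner product and its modulus
  set c : ℂ := ∑ i, ∑ j, (starRingEnd ℂ) (α i * β i j) * (α' i * β' i j) with hcdef
  set F : ℝ := ‖c‖ with hFdef
  have hFnn : 0 ≤ F := norm_nonneg c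
  have hF2 : 1 - 2 * ε ≤ F ^ 2 := by linarith [hReq]
  have hF : 1 - 2 * ε ≤ F := by nlinarith
  have hFpos : 0 < F := by nlinarith
  have hcne : c ≠ 0 := by
    intro h
    rw [hFdef, h] at hFpos
    simp at hFpos
  -- the phase
  set u : ℂ := (F : ℂ) / c with hudef
  have huc : u * c = (F : ℂ) := by
    rw [hudef]; field_simp
  have habsu : ‖u‖ = 1 := by
    rw [hudef, norm_div, Complex.norm_real, Real.norm_eq_abs, abs_of_nonneg hFnn]
    exact div_self hFpos.ne'
  -- the two states and the phase-adjusted second state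
  set x : Fin m → Fin 3 → ℂ := fun i j => α i * β i j with hxdef
  set y : Fin m → Fin 3 → ℂ := fun i j => u * (α' i * β' i j) with hydef
  have hxnorm : ∑ i, ∑ j, ‖x i j‖ ^ 2 = 1 := by
    simp only [hxdef, map_mul, norm_mul, mul_pow, ← Finset.mul_sum, hβ, mul_one]
    exact hα
  have hynorm : ∑ i, ∑ j, ‖y i j‖ ^ 2 = 1 := by
    simp only [hydef, map_mul, norm_mul, mul_pow, habsu, one_pow, one_mul, ← Finset.mul_sum, hβ', mul_one]
    exact hα'
  -- inner product with phase-adjusted state is real, equal to F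
  have hinner : ∑ i, ∑ j, (x i j * (starRingEnd ℂ) (y i j)) = (F : ℂ) := by
    have h1 : ∀ i j, x i j * (starRingEnd ℂ) (y i j)
        = (starRingEnd ℂ) (u * ((starRingEnd ℂ) (α i * β i j) * (α' i * β' i j))) := by
      intro i j
      simp only [hxdef, hydef, map_mul, norm_mul, Complex.conj_conj]
      ring
    calc ∑ i, ∑ j, (x i j * (starRingEnd ℂ) (y i j))
        = ∑ i, ∑ j, (starRingEnd ℂ) (u * ((starRingEnd ℂ) (α i * β i j) * (α' i * β' i j))) := by
          simp only [h1]
      _ = (starRingEnd ℂ) (u * c) := by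
          rw [hcdef, Finset.mul_sum, map_sum]
          congr 1; ext i
          rw [Finset.mul_sum, map_sum]
      _ = (F : ℂ) := by rw [huc, Complex.conj_ofReal]
  -- total squared distance
  have hD : ∑ i, ∑ j, Complex.normSq (x i j - y i j) = 2 - 2 * F := by
    have expand : ∀ i j, Complex.normSq (x i j - y i j)
        = ‖x i j‖ ^ 2 + ‖y i j‖ ^ 2
          - 2 * (x i j * (starRingEnd ℂ) (y i j)).re := by
      intro i j
      rw [Complex.normSq_sub, Complex.sq_norm, Complex.sq_norm]
    calc ∑ i, ∑ j, Complex.normSq (x i j - y i j)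
        = ∑ i, ∑ j, (‖x i j‖ ^ 2 + ‖y i j‖ ^ 2
            - 2 * (x i j * (starRingEnd ℂ) (y i j)).re) := by simp only [expand]
      _ = (∑ i, ∑ j, ‖x i j‖ ^ 2) + (∑ i, ∑ j, ‖y i j‖ ^ 2)
            - 2 * (∑ i, ∑ j, (x i j * (starRingEnd ℂ) (y i j)).re) := by
          simp only [Finset.sum_add_distrib, Finset.sum_sub_distrib, ← Finset.mul_sum]
      _ = 2 - 2 * F := by
          rw [hxnorm, hynorm, show (∑ i, ∑ j, (x i j * (starRingEnd ℂ) (y i j)).re) = F by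
            simp only [← Complex.re_sum]
            rw [hinner, Complex.ofReal_re]]
          ring
  have hDle : ∑ i, ∑ j, Complex.normSq (x i j - y i j) ≤ 4 * t ^ 2 := by
    rw [hD, ← hεt]; linarith
  -- coordinatewise bounds
  have hxle1 : ∀ i j, ‖x i j‖ ^ 2 ≤ 1 := by
    intro i j
    have h4 : ‖x i j‖ ^ 2 ≤ ∑ j', ‖x i j'‖ ^ 2 :=
      Finset.single_le_sum (f := fun j' => ‖x i j'‖ ^ 2)
        (fun j' _ => sq_nonneg _) (Finset.mem_univ j)
    have h2 : (∑ j', ‖x i j'‖ ^ 2) ≤ ∑ i, ∑ j, ‖x i j‖ ^ 2 :=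
      Finset.single_le_sum (f := fun i => ∑ j, ‖x i j‖ ^ 2)
        (fun i' _ => Finset.sum_nonneg fun _ _ => sq_nonneg _) (Finset.mem_univ i)
    rw [hxnorm] at h2
    linarith
  have hyle1 : ∀ i j, ‖y i j‖ ^ 2 ≤ 1 := by
    intro i j
    have h4 : ‖y i j‖ ^ 2 ≤ ∑ j', ‖y i j'‖ ^ 2 :=
      Finset.single_le_sum (f := fun j' => ‖y i j'‖ ^ 2)
        (fun j' _ => sq_nonneg _) (Finset.mem_univ j)
    have h2 : (∑ j', ‖y i j'‖ ^ 2) ≤ ∑ i, ∑ j, ‖y i j‖ ^ 2 :=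
      Finset.single_le_sum (f := fun i => ∑ j, ‖y i j‖ ^ 2)
        (fun i' _ => Finset.sum_nonneg fun _ _ => sq_nonneg _) (Finset.mem_univ i)
    rw [hynorm] at h2
    linarith
  have hcoord : ∀ j, Complex.normSq (x i₀ j - y i₀ j) ≤ 4 * t ^ 2 := by
    intro j
    have h4 : Complex.normSq (x i₀ j - y i₀ j) ≤ ∑ j', Complex.normSq (x i₀ j' - y i₀ j') :=
      Finset.single_le_sum (f := fun j' => Complex.normSq (x i₀ j' - y i₀ j'))
        (fun j' _ => Complex.normSq_nonneg _) (Finset.mem_univ j)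
    have h2 : (∑ j', Complex.normSq (x i₀ j' - y i₀ j'))
        ≤ ∑ i, ∑ j, Complex.normSq (x i j - y i j) :=
      Finset.single_le_sum (f := fun i => ∑ j, Complex.normSq (x i j - y i j))
        (fun i' _ => Finset.sum_nonneg fun j' _ => Complex.normSq_nonneg _)
        (Finset.mem_univ i₀)
    linarith
  -- q_j ≥ p_j - 4t
  have hq_lb : ∀ j, ‖x i₀ j‖ ^ 2 - 4 * t ≤ ‖y i₀ j‖ ^ 2 := by
    intro j
    have h1 : |‖x i₀ j‖ - ‖y i₀ j‖| ≤ ‖x i₀ j - y i₀ j‖ :=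
      abs_norm_sub_norm_le _ _
    have h2 : ‖x i₀ j - y i₀ j‖ ^ 2 ≤ 4 * t ^ 2 := by
      rw [Complex.sq_norm]; exact hcoord j
    have h3 : ‖x i₀ j‖ - ‖y i₀ j‖ ≤ 2 * t := by
      nlinarith [abs_nonneg (‖x i₀ j‖ - ‖y i₀ j‖),
        norm_nonneg (x i₀ j - y i₀ j), le_abs_self (‖x i₀ j‖ - ‖y i₀ j‖)]
    have hx1 : ‖x i₀ j‖ ≤ 1 := by
      nlinarith [hxle1 i₀ j, norm_nonneg (x i₀ j)]
    have hy1 : ‖y i₀ j‖ ≤ 1 := by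
      nlinarith [hyle1 i₀ j, norm_nonneg (y i₀ j)]
    nlinarith [norm_nonneg (x i₀ j), norm_nonneg (y i₀ j)]
  -- the same-vertex rejection term for i₀
  have hT : (∑ j, ∑ j', (if j = j' then 0 else
      ‖α i₀‖ ^ 2 * ‖β i₀ j‖ ^ 2 *
        ‖α' i₀‖ ^ 2 * ‖β' i₀ j'‖ ^ 2)) ≤ ε := by
    have h1 : ∀ i ∈ Finset.univ, (0:ℝ) ≤ ∑ j, ∑ j', (if j = j' then 0 else
        ‖α i‖ ^ 2 * ‖β i j‖ ^ 2 *
          ‖α' i‖ ^ 2 * ‖β' i j'‖ ^ 2) := by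
      intro i _
      apply Finset.sum_nonneg; intro j _
      apply Finset.sum_nonneg; intro j' _
      split
      · exact le_rfl
      · positivity
    have h2 := Finset.single_le_sum h1 (Finset.mem_univ i₀)
    exact le_trans h2 hRsv
  -- notation for the fixed vertex
  set a : ℝ := ‖α i₀‖ ^ 2 with hadef
  set b : Fin 3 → ℝ := fun j => ‖β i₀ j‖ ^ 2 with hbdef
  set q : Fin 3 → ℝ := fun j => ‖y i₀ j‖ ^ 2 with hqdef
  have hpx : ∀ j, ‖x i₀ j‖ ^ 2 = a * b j := by
    intro j; simp only [hxdef, hadef, hbdef, map_mul, norm_mul, mul_pow]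
  have hqa : ∀ j, q j = ‖α' i₀‖ ^ 2 * ‖β' i₀ j‖ ^ 2 := by
    intro j; simp only [hqdef, hydef, map_mul, norm_mul, mul_pow, habsu, one_pow, one_mul]
  have hbsum : b 0 + b 1 + b 2 = 1 := by
    have := hβ i₀
    rw [Fin.sum_univ_three] at this
    exact this
  have hb0 : b 0 < 9/10 := hcon 0
  have hb1 : b 1 < 9/10 := hcon 1
  have hb2 : b 2 < 9/10 := hcon 2
  have hbnn : ∀ j, 0 ≤ b j := by intro j; rw [hbdef]; positivity
  have hqnn : ∀ j, 0 ≤ q j := by intro j; rw [hqdef]; positivity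
  have hq_lb' : ∀ j, a * b j - 4 * t ≤ q j := by
    intro j
    have := hq_lb j
    rw [hpx j] at this
    exact this
  have hT' : a * b 0 * q 1 + a * b 0 * q 2 + a * b 1 * q 0 + a * b 1 * q 2
      + a * b 2 * q 0 + a * b 2 * q 1 ≤ ε := by
    have := hT
    rw [Fin.sum_univ_three] at this
    simp only [Fin.sum_univ_three] at this
    norm_num [Fin.ext_iff] at this
    have hb0' : ‖β i₀ 0‖ ^ 2 = b 0 := rfl
    have hb1' : ‖β i₀ 1‖ ^ 2 = b 1 := rfl
    have hb2' : ‖β i₀ 2‖ ^ 2 = b 2 := rfl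
    rw [hb0', hb1', hb2'] at this
    calc a * b 0 * q 1 + a * b 0 * q 2 + a * b 1 * q 0 + a * b 1 * q 2
        + a * b 2 * q 0 + a * b 2 * q 1
        = (a * b 0 * (‖α' i₀‖ ^ 2 * ‖β' i₀ 1‖ ^ 2)
          + a * b 0 * (‖α' i₀‖ ^ 2 * ‖β' i₀ 2‖ ^ 2)
          + a * b 1 * (‖α' i₀‖ ^ 2 * ‖β' i₀ 0‖ ^ 2)
          + a * b 1 * (‖α' i₀‖ ^ 2 * ‖β' i₀ 2‖ ^ 2)
          + a * b 2 * (‖α' i₀‖ ^ 2 * ‖β' i₀ 0‖ ^ 2)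
          + a * b 2 * (‖α' i₀‖ ^ 2 * ‖β' i₀ 1‖ ^ 2)) := by
            simp only [hqa]
      _ ≤ ε := by linarith [this]
  -- final contradiction
  have hanng : 0 ≤ a := by rw [hadef]; positivity
  have ha' : 1 / (100 * M) ≤ a := ha
  have hat : 1000 * t ≤ a := by
    have : 1000 * t = 1 / (100 * M) := by rw [htdef]; field_simp; ring
    linarith
  have hb2sq : b 0 ^ 2 + b 1 ^ 2 + b 2 ^ 2 ≤ 9/10 := by
    nlinarith [hbnn 0, hbnn 1, hbnn 2]
  have hbsq1 : (b 0 + b 1 + b 2) ^ 2 = 1 := by rw [hbsum]; norm_num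
  have hS : (1:ℝ)/10 ≤ 2 * (b 0 * b 1 + b 0 * b 2 + b 1 * b 2) := by
    nlinarith [hbsq1, hb2sq]
  have e1 : a * b 0 * (a * b 1 - 4*t) ≤ a * b 0 * q 1 :=
    mul_le_mul_of_nonneg_left (hq_lb' 1) (mul_nonneg hanng (hbnn 0))
  have e2 : a * b 0 * (a * b 2 - 4*t) ≤ a * b 0 * q 2 :=
    mul_le_mul_of_nonneg_left (hq_lb' 2) (mul_nonneg hanng (hbnn 0))
  have e3 : a * b 1 * (a * b 0 - 4*t) ≤ a * b 1 * q 0 :=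
    mul_le_mul_of_nonneg_left (hq_lb' 0) (mul_nonneg hanng (hbnn 1))
  have e4 : a * b 1 * (a * b 2 - 4*t) ≤ a * b 1 * q 2 :=
    mul_le_mul_of_nonneg_left (hq_lb' 2) (mul_nonneg hanng (hbnn 1))
  have e5 : a * b 2 * (a * b 0 - 4*t) ≤ a * b 2 * q 0 :=
    mul_le_mul_of_nonneg_left (hq_lb' 0) (mul_nonneg hanng (hbnn 2))
  have e6 : a * b 2 * (a * b 1 - 4*t) ≤ a * b 2 * q 1 :=
    mul_le_mul_of_nonneg_left (hq_lb' 1) (mul_nonneg hanng (hbnn 2))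
  have hsum6 : 2 * a^2 * (b 0 * b 1 + b 0 * b 2 + b 1 * b 2)
      - 8 * t * a * (b 0 + b 1 + b 2) ≤ ε := by
    have expand : 2 * a^2 * (b 0 * b 1 + b 0 * b 2 + b 1 * b 2)
        - 8 * t * a * (b 0 + b 1 + b 2)
        = a * b 0 * (a * b 1 - 4*t) + a * b 0 * (a * b 2 - 4*t)
          + a * b 1 * (a * b 0 - 4*t) + a * b 1 * (a * b 2 - 4*t)
          + a * b 2 * (a * b 0 - 4*t) + a * b 2 * (a * b 1 - 4*t) := by ring
    rw [expand]
    linarith [e1, e2, e3, e4, e5, e6, hT']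
  have key : a ^ 2 / 10 - 8 * t * a ≤ t ^ 2 := by
    have h1 : a ^ 2 * (1/10) ≤ a ^ 2 * (2 * (b 0 * b 1 + b 0 * b 2 + b 1 * b 2)) :=
      mul_le_mul_of_nonneg_left hS (sq_nonneg a)
    rw [hbsum] at hsum6
    rw [hεt] at hsum6
    linarith only [h1, hsum6]
  have p1 : 1000 * t * a ≤ a * a := mul_le_mul_of_nonneg_right hat hanng
  have p2 : 1000 * t * t ≤ a * t := mul_le_mul_of_nonneg_right hat htpos.le
  have ht2 : 0 < t ^ 2 := pow_pos htpos 2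
  linarith only [key, p1, p2, ht2]
end

section
/- Let m ≥ 1 and set ε = 10⁻¹⁰ · m⁻². Let ψ, φ ∈ ℂ^m ⊗ ℂ³ be unit vectors in decomposed form with amplitudes (α_i, β_{i,j}) and (α'_i, β'_{i,j}) respectively, and let u₃ = (1/√3)(f₀ + f₁ + f₂) ∈ ℂ³. Suppose that R_eq = 1 − ½(1 + |⟨ψ, φ⟩|²) ≤ ε and R_sv = Σ_{i<m} Σ_{j≠j'} |α_i|² |β_{i,j}|² |α'_i|² |β'_{i,j'}|² ≤ ε. Then ‖(I_m ⊗ u₃u₃*) ψ‖² = Σ_{i<m} |α_i|² · (1/3) · |β_{i,0} + β_{i,1} + β_{i,2}|² ≥ 1/20, i.e. the probability of obtaining the uniform-projection outcome when measuring the color register of ψ is at least 0.05. -/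
noncomputable def toEuc {ι : Type*} [Fintype ι] (f : ι → ℂ) : EuclideanSpace ℂ ι := WithLp.toLp 2 f

private lemma key3 (x y z : ℂ)
    (h : Norm.norm x ^ 2 + Norm.norm y ^ 2 + Norm.norm z ^ 2 = 1)
    (hx : 99 / 100 ≤ Norm.norm x ^ 2) :
    7 / 10 ≤ Norm.norm (x + y + z) ^ 2 := by
  have hx0 := norm_nonneg x
  have hy0 := norm_nonneg y
  have hz0 := norm_nonneg z
  have hax : (0.994 : ℝ) ≤ Norm.norm x := by nlinarith
  have hyz : Norm.norm y + Norm.norm z ≤ 0.142 := by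
    nlinarith [sq_nonneg (Norm.norm y - Norm.norm z)]
  have h1 : Norm.norm x ≤ Norm.norm (x + y + z) + (Norm.norm y + Norm.norm z) := by
    have t1 := norm_sub_le (x + y + z) (y + z)
    have t2 := norm_add_le y z
    rw [show x + y + z - (y + z) = x from by ring] at t1
    linarith
  nlinarith [norm_nonneg (x + y + z)]

set_option maxHeartbeats 1000000 in
/-- **Lemma (uniform color outcome is likely).**
Set `ε = 10⁻¹⁰ m⁻²`. If `R_eq ≤ ε` and `R_sv ≤ ε`, then the probability
`‖(I_m ⊗ u₃u₃*) ψ‖² = Σ_i |α_i|² (1/3) |β_{i,0} + β_{i,1} + β_{i,2}|²`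
of obtaining the uniform-projection outcome on the color register of `ψ`
is at least `1/20`. Here `(I_m ⊗ u₃u₃*) ψ` has coordinates
`(i, j) ↦ (1/3) α_i (β_{i,0} + β_{i,1} + β_{i,2})`. -/
theorem uniform_color_outcome_likely (m : ℕ) (hm : 1 ≤ m)
    (α α' : Fin m → ℂ) (β β' : Fin m → Fin 3 → ℂ)
    (hα : ∑ i, Norm.norm (α i) ^ 2 = 1)
    (hα' : ∑ i, Norm.norm (α' i) ^ 2 = 1)
    (hβ : ∀ i, ∑ j, Norm.norm (β i j) ^ 2 = 1)
    (hβ' : ∀ i, ∑ j, Norm.norm (β' i j) ^ 2 = 1)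
    (hReq : 1 - (1 / 2 : ℝ) * (1 + Norm.norm
        (∑ i, ∑ j, (starRingEnd ℂ) (α i * β i j) * (α' i * β' i j)) ^ 2)
      ≤ 1 / (10 ^ 10 * (m : ℝ) ^ 2))
    (hRsv : ∑ i, ∑ j, ∑ j', (if j = j' then 0 else
        Norm.norm (α i) ^ 2 * Norm.norm (β i j) ^ 2 *
          Norm.norm (α' i) ^ 2 * Norm.norm (β' i j') ^ 2)
      ≤ 1 / (10 ^ 10 * (m : ℝ) ^ 2)) :
    ‖toEuc (fun p : Fin m × Fin 3 =>
        (1 / 3 : ℂ) * (α p.1 * (β p.1 0 + β p.1 1 + β p.1 2)))‖ ^ 2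
      = ∑ i, Norm.norm (α i) ^ 2 * (1 / 3) *
          Norm.norm (β i 0 + β i 1 + β i 2) ^ 2
    ∧ ∑ i, Norm.norm (α i) ^ 2 * (1 / 3) *
          Norm.norm (β i 0 + β i 1 + β i 2) ^ 2 ≥ 1 / 20 := by
  classical
  have hm1 : (1 : ℝ) ≤ (m : ℝ) := by exact_mod_cast hm
  have hm0 : (0 : ℝ) < (m : ℝ) := by linarith
  set ε : ℝ := 1 / (10 ^ 10 * (m : ℝ) ^ 2) with hεdef
  set σ : ℝ := 1 / (10 ^ 5 * (m : ℝ)) with hσdef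
  have hσ0 : 0 < σ := by positivity
  have hεσ : ε = σ ^ 2 := by rw [hεdef, hσdef]; field_simp
  have hε0 : 0 < ε := by positivity
  -- part 1 : norm computation
  have hnorm : ‖toEuc (fun p : Fin m × Fin 3 =>
        (1 / 3 : ℂ) * (α p.1 * (β p.1 0 + β p.1 1 + β p.1 2)))‖ ^ 2
      = ∑ i, Norm.norm (α i) ^ 2 * (1 / 3) *
          Norm.norm (β i 0 + β i 1 + β i 2) ^ 2 := by
    rw [EuclideanSpace.norm_eq, Real.sq_sqrt (Finset.sum_nonneg fun p _ => sq_nonneg _)]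
    rw [Fintype.sum_prod_type]
    refine Finset.sum_congr rfl fun i _ => ?_
    simp only [toEuc, PiLp.toLp_apply, norm_mul]
    rw [Finset.sum_const, Finset.card_univ, Fintype.card_fin]
    rw [show Norm.norm (1/3 : ℂ) = 1/3 by
      rw [norm_div, norm_one]; norm_num]
    ring
  refine ⟨hnorm, ?_⟩
  -- abbreviations
  set X := Norm.norm (∑ i, ∑ j, (starRingEnd ℂ) (α i * β i j) * (α' i * β' i j)) with hXdef
  have hX1 : 1 - 2 * ε ≤ X ^ 2 := by linarith
  set C := ∑ i, Norm.norm (α i) * Norm.norm (α' i) with hCdef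
  have hC0 : 0 ≤ C := Finset.sum_nonneg fun i _ =>
    mul_nonneg (norm_nonneg _) (norm_nonneg _)
  have hbb : ∀ i, ∑ j, Norm.norm (β i j) * Norm.norm (β' i j) ≤ 1 := by
    intro i
    have h2 := Finset.sum_mul_sq_le_sq_mul_sq Finset.univ
      (fun j => Norm.norm (β i j)) (fun j => Norm.norm (β' i j))
    rw [hβ i, hβ' i] at h2
    have hpos : 0 ≤ ∑ j, Norm.norm (β i j) * Norm.norm (β' i j) :=
      Finset.sum_nonneg fun j _ => mul_nonneg (norm_nonneg _) (norm_nonneg _)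
    nlinarith
  have hXC : X ≤ C := by
    calc X ≤ ∑ i, Norm.norm (∑ j, (starRingEnd ℂ) (α i * β i j) * (α' i * β' i j)) :=
          norm_sum_le _ _
      _ ≤ ∑ i, Norm.norm (α i) * Norm.norm (α' i) := by
          refine Finset.sum_le_sum fun i _ => ?_
          calc Norm.norm (∑ j, (starRingEnd ℂ) (α i * β i j) * (α' i * β' i j))
              ≤ ∑ j, Norm.norm ((starRingEnd ℂ) (α i * β i j) * (α' i * β' i j)) :=
                norm_sum_le _ _
            _ = ∑ j, (Norm.norm (β i j) * Norm.norm (β' i j)) *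
                  (Norm.norm (α i) * Norm.norm (α' i)) := by
                refine Finset.sum_congr rfl fun j _ => ?_
                simp only [norm_mul, Complex.norm_conj]
                ring
            _ = (∑ j, Norm.norm (β i j) * Norm.norm (β' i j)) *
                  (Norm.norm (α i) * Norm.norm (α' i)) := by rw [Finset.sum_mul]
            _ ≤ 1 * (Norm.norm (α i) * Norm.norm (α' i)) :=
                mul_le_mul_of_nonneg_right (hbb i)
                  (mul_nonneg (norm_nonneg _) (norm_nonneg _))
            _ = Norm.norm (α i) * Norm.norm (α' i) := one_mul _
  have hCle1 : C ≤ 1 := by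
    have h2 := Finset.sum_mul_sq_le_sq_mul_sq Finset.univ
      (fun i => Norm.norm (α i)) (fun i => Norm.norm (α' i))
    rw [hα, hα'] at h2
    nlinarith
  have hC2 : 1 - 2 * ε ≤ C ^ 2 := by
    have := pow_le_pow_left₀ (norm_nonneg _) hXC 2
    linarith
  have h1C : 1 - C ≤ 2 * ε := by nlinarith
  -- sum |w - w'| ≤ 4σ
  have hdiff : ∑ i, |Norm.norm (α i) ^ 2 - Norm.norm (α' i) ^ 2| ≤ 4 * σ := by
    have hsq : ∑ i, (Norm.norm (α i) - Norm.norm (α' i)) ^ 2 = 2 - 2 * C := by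
      have e : ∀ i : Fin m, (Norm.norm (α i) - Norm.norm (α' i)) ^ 2
          = Norm.norm (α i) ^ 2 + Norm.norm (α' i) ^ 2
            - 2 * (Norm.norm (α i) * Norm.norm (α' i)) := fun i => by ring
      rw [Finset.sum_congr rfl fun i _ => e i]
      rw [Finset.sum_sub_distrib, Finset.sum_add_distrib, hα, hα', ← Finset.mul_sum, ← hCdef]
      ring
    have hplus : ∑ i, (Norm.norm (α i) + Norm.norm (α' i)) ^ 2 = 2 + 2 * C := by
      have e : ∀ i : Fin m, (Norm.norm (α i) + Norm.norm (α' i)) ^ 2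
          = Norm.norm (α i) ^ 2 + Norm.norm (α' i) ^ 2
            + 2 * (Norm.norm (α i) * Norm.norm (α' i)) := fun i => by ring
      rw [Finset.sum_congr rfl fun i _ => e i]
      rw [Finset.sum_add_distrib, Finset.sum_add_distrib, hα, hα', ← Finset.mul_sum, ← hCdef]
      ring
    have hcs := Finset.sum_mul_sq_le_sq_mul_sq Finset.univ
      (fun i => |Norm.norm (α i) - Norm.norm (α' i)|)
      (fun i => Norm.norm (α i) + Norm.norm (α' i))
    simp only [sq_abs] at hcs
    rw [hsq, hplus] at hcs
    have he : ∀ i : Fin m, |Norm.norm (α i) - Norm.norm (α' i)|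
        * (Norm.norm (α i) + Norm.norm (α' i))
        = |Norm.norm (α i) ^ 2 - Norm.norm (α' i) ^ 2| := by
      intro i
      have hp : 0 ≤ Norm.norm (α i) + Norm.norm (α' i) :=
        add_nonneg (norm_nonneg _) (norm_nonneg _)
      rw [show Norm.norm (α i) ^ 2 - Norm.norm (α' i) ^ 2
          = (Norm.norm (α i) - Norm.norm (α' i)) * (Norm.norm (α i) + Norm.norm (α' i))
          from by ring, abs_mul, abs_of_nonneg hp]
    rw [Finset.sum_congr rfl fun i _ => he i] at hcs
    have hS0 : 0 ≤ ∑ i, |Norm.norm (α i) ^ 2 - Norm.norm (α' i) ^ 2| :=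
      Finset.sum_nonneg fun i _ => abs_nonneg _
    have h16 : (∑ i, |Norm.norm (α i) ^ 2 - Norm.norm (α' i) ^ 2|) ^ 2 ≤ (4 * σ) ^ 2 := by
      nlinarith
    exact (pow_le_pow_iff_left₀ hS0 (by positivity) two_ne_zero).mp h16
  -- R_sv rewritten
  have hRsv' : ∑ i, (Norm.norm (α i) ^ 2 * Norm.norm (α' i) ^ 2) *
      (1 - ∑ j, Norm.norm (β i j) ^ 2 * Norm.norm (β' i j) ^ 2) ≤ ε := by
    refine le_trans (le_of_eq ?_) hRsv
    refine Finset.sum_congr rfl fun i _ => ?_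
    have HB := hβ i
    have HC := hβ' i
    rw [Fin.sum_univ_three] at HB HC
    rw [Fin.sum_univ_three]
    simp only [Fin.sum_univ_three]
    norm_num [Fin.ext_iff]
    linear_combination (-(Norm.norm (α i) ^ 2 * Norm.norm (α' i) ^ 2 *
        (Norm.norm (β' i 0) ^ 2 + Norm.norm (β' i 1) ^ 2 + Norm.norm (β' i 2) ^ 2))) * HB
      - (Norm.norm (α i) ^ 2 * Norm.norm (α' i) ^ 2) * HC
  -- bad set
  set p : Fin m → Prop :=
    fun i => (∑ j, Norm.norm (β i j) ^ 2 * Norm.norm (β' i j) ^ 2) < 99 / 100 with hpdef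
  have hw1 : ∀ i : Fin m, Norm.norm (α i) ^ 2 ≤ 1 := by
    intro i
    calc Norm.norm (α i) ^ 2 ≤ ∑ i, Norm.norm (α i) ^ 2 :=
          Finset.single_le_sum (f := fun i => Norm.norm (α i) ^ 2)
            (fun i _ => sq_nonneg _) (Finset.mem_univ i)
      _ = 1 := hα
  have hs01 : ∀ i : Fin m,
      0 ≤ (∑ j, Norm.norm (β i j) ^ 2 * Norm.norm (β' i j) ^ 2) ∧
      (∑ j, Norm.norm (β i j) ^ 2 * Norm.norm (β' i j) ^ 2) ≤ 1 := by
    intro i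
    constructor
    · exact Finset.sum_nonneg fun j _ => mul_nonneg (sq_nonneg _) (sq_nonneg _)
    · calc (∑ j, Norm.norm (β i j) ^ 2 * Norm.norm (β' i j) ^ 2)
          ≤ ∑ j, Norm.norm (β' i j) ^ 2 := by
            refine Finset.sum_le_sum fun j _ => ?_
            have hb1 : Norm.norm (β i j) ^ 2 ≤ 1 := by
              calc Norm.norm (β i j) ^ 2 ≤ ∑ j, Norm.norm (β i j) ^ 2 :=
                    Finset.single_le_sum (f := fun j => Norm.norm (β i j) ^ 2)
                      (fun j _ => sq_nonneg _) (Finset.mem_univ j)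
                _ = 1 := hβ i
            nlinarith [sq_nonneg (Norm.norm (β' i j))]
      _ = 1 := hβ' i
  have hBbound : ∑ i ∈ Finset.univ.filter p, Norm.norm (α i) ^ 2 * Norm.norm (α' i) ^ 2
      ≤ 100 * ε := by
    have h1 : ∀ i ∈ Finset.univ.filter p,
        Norm.norm (α i) ^ 2 * Norm.norm (α' i) ^ 2
        ≤ 100 * ((Norm.norm (α i) ^ 2 * Norm.norm (α' i) ^ 2) *
            (1 - ∑ j, Norm.norm (β i j) ^ 2 * Norm.norm (β' i j) ^ 2)) := by
      intro i hi
      have hs : (∑ j, Norm.norm (β i j) ^ 2 * Norm.norm (β' i j) ^ 2) < 99 / 100 :=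
        (Finset.mem_filter.mp hi).2
      nlinarith [mul_nonneg (sq_nonneg (Norm.norm (α i))) (sq_nonneg (Norm.norm (α' i)))]
    have h2 : ∑ i ∈ Finset.univ.filter p,
        ((Norm.norm (α i) ^ 2 * Norm.norm (α' i) ^ 2) *
          (1 - ∑ j, Norm.norm (β i j) ^ 2 * Norm.norm (β' i j) ^ 2))
        ≤ ∑ i, ((Norm.norm (α i) ^ 2 * Norm.norm (α' i) ^ 2) *
          (1 - ∑ j, Norm.norm (β i j) ^ 2 * Norm.norm (β' i j) ^ 2)) := by
      refine Finset.sum_le_sum_of_subset_of_nonneg (Finset.filter_subset _ _) fun i _ _ => ?_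
      have := (hs01 i).2
      nlinarith [mul_nonneg (sq_nonneg (Norm.norm (α i))) (sq_nonneg (Norm.norm (α' i)))]
    calc ∑ i ∈ Finset.univ.filter p, Norm.norm (α i) ^ 2 * Norm.norm (α' i) ^ 2
        ≤ ∑ i ∈ Finset.univ.filter p,
            100 * ((Norm.norm (α i) ^ 2 * Norm.norm (α' i) ^ 2) *
              (1 - ∑ j, Norm.norm (β i j) ^ 2 * Norm.norm (β' i j) ^ 2)) :=
          Finset.sum_le_sum h1
      _ = 100 * ∑ i ∈ Finset.univ.filter p,
            ((Norm.norm (α i) ^ 2 * Norm.norm (α' i) ^ 2) *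
              (1 - ∑ j, Norm.norm (β i j) ^ 2 * Norm.norm (β' i j) ^ 2)) := by
          rw [Finset.mul_sum]
      _ ≤ 100 * ε := by nlinarith [le_trans h2 hRsv']
  have hBsum : ∑ i ∈ Finset.univ.filter p, Norm.norm (α i) ^ 2 ≤ 1 / 150 := by
    have hB2 : ∑ i ∈ Finset.univ.filter p, (Norm.norm (α i) ^ 2) ^ 2
        ≤ 100 * ε + 4 * σ := by
      have h1 : ∀ i ∈ Finset.univ.filter p, (Norm.norm (α i) ^ 2) ^ 2
          ≤ Norm.norm (α i) ^ 2 * Norm.norm (α' i) ^ 2 +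
            |Norm.norm (α i) ^ 2 - Norm.norm (α' i) ^ 2| := by
        intro i _
        nlinarith [hw1 i, le_abs_self (Norm.norm (α i) ^ 2 - Norm.norm (α' i) ^ 2),
          abs_nonneg (Norm.norm (α i) ^ 2 - Norm.norm (α' i) ^ 2),
          sq_nonneg (Norm.norm (α i))]
      have h2 : ∑ i ∈ Finset.univ.filter p, |Norm.norm (α i) ^ 2 - Norm.norm (α' i) ^ 2|
          ≤ ∑ i, |Norm.norm (α i) ^ 2 - Norm.norm (α' i) ^ 2| :=
        Finset.sum_le_sum_of_subset_of_nonneg (Finset.filter_subset _ _)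
          fun i _ _ => abs_nonneg _
      calc ∑ i ∈ Finset.univ.filter p, (Norm.norm (α i) ^ 2) ^ 2
          ≤ ∑ i ∈ Finset.univ.filter p,
              (Norm.norm (α i) ^ 2 * Norm.norm (α' i) ^ 2 +
                |Norm.norm (α i) ^ 2 - Norm.norm (α' i) ^ 2|) := Finset.sum_le_sum h1
        _ = (∑ i ∈ Finset.univ.filter p, Norm.norm (α i) ^ 2 * Norm.norm (α' i) ^ 2)
            + ∑ i ∈ Finset.univ.filter p, |Norm.norm (α i) ^ 2 - Norm.norm (α' i) ^ 2| :=
            Finset.sum_add_distrib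
        _ ≤ 100 * ε + 4 * σ := by linarith [le_trans h2 hdiff]
    have hcs : (∑ i ∈ Finset.univ.filter p, Norm.norm (α i) ^ 2) ^ 2
        ≤ (Finset.univ.filter p).card * ∑ i ∈ Finset.univ.filter p, (Norm.norm (α i) ^ 2) ^ 2 :=
      sq_sum_le_card_mul_sum_sq
    have hcard : ((Finset.univ.filter p).card : ℝ) ≤ (m : ℝ) := by
      have h1 := Finset.card_filter_le Finset.univ p
      have h2 : (Finset.univ : Finset (Fin m)).card = m := by simp
      exact_mod_cast h2 ▸ h1
    have hS0 : 0 ≤ ∑ i ∈ Finset.univ.filter p, Norm.norm (α i) ^ 2 :=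
      Finset.sum_nonneg fun i _ => sq_nonneg _
    have hnum : (m : ℝ) * (100 * ε + 4 * σ) ≤ (1 / 150) ^ 2 := by
      have e : (m : ℝ) * (100 * (1 / (10 ^ 10 * (m : ℝ) ^ 2)) + 4 * (1 / (10 ^ 5 * (m : ℝ))))
          = 100 / (10 ^ 10 * (m : ℝ)) + 4 / 10 ^ 5 := by
        field_simp
      rw [hεdef, hσdef, e]
      have h8 : 100 / (10 ^ 10 * (m : ℝ)) ≤ 100 / 10 ^ 10 := by
        apply div_le_div_of_nonneg_left (by norm_num) (by norm_num)
        nlinarith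
      norm_num at h8 ⊢
      linarith
    have key : (∑ i ∈ Finset.univ.filter p, Norm.norm (α i) ^ 2) ^ 2 ≤ (1 / 150 : ℝ) ^ 2 := by
      refine le_trans hcs (le_trans ?_ hnum)
      have hsq0 : 0 ≤ ∑ i ∈ Finset.univ.filter p, (Norm.norm (α i) ^ 2) ^ 2 :=
        Finset.sum_nonneg fun i _ => sq_nonneg _
      exact mul_le_mul hcard hB2 hsq0 (by positivity)
    exact (pow_le_pow_iff_left₀ hS0 (by norm_num) two_ne_zero).mp key
  have hGsum : 149 / 150 ≤ ∑ i ∈ Finset.univ.filter (fun i => ¬ p i), Norm.norm (α i) ^ 2 := by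
    have hsplit := Finset.sum_filter_add_sum_filter_not Finset.univ p
      (fun i => Norm.norm (α i) ^ 2)
    rw [hα] at hsplit
    linarith
  have hgood_i : ∀ i : Fin m, ¬ p i →
      7 / 10 ≤ Norm.norm (β i 0 + β i 1 + β i 2) ^ 2 := by
    intro i hip
    have hs : 99 / 100 ≤ ∑ j, Norm.norm (β i j) ^ 2 * Norm.norm (β' i j) ^ 2 := not_lt.mp hip
    have HB := hβ i
    have HC := hβ' i
    rw [Fin.sum_univ_three] at HB HC
    rw [Fin.sum_univ_three] at hs
    have hc0 : 0 ≤ Norm.norm (β' i 0) ^ 2 := sq_nonneg _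
    have hc1 : 0 ≤ Norm.norm (β' i 1) ^ 2 := sq_nonneg _
    have hc2 : 0 ≤ Norm.norm (β' i 2) ^ 2 := sq_nonneg _
    have hmax : 99 / 100 ≤ Norm.norm (β i 0) ^ 2 ∨ 99 / 100 ≤ Norm.norm (β i 1) ^ 2 ∨
        99 / 100 ≤ Norm.norm (β i 2) ^ 2 := by
      by_contra hcon
      push_neg at hcon
      obtain ⟨h0, h1, h2⟩ := hcon
      have hc3 : 1 / 3 ≤ Norm.norm (β' i 0) ^ 2 ∨ 1 / 3 ≤ Norm.norm (β' i 1) ^ 2 ∨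
          1 / 3 ≤ Norm.norm (β' i 2) ^ 2 := by
        by_contra h
        push_neg at h
        linarith [h.1, h.2.1, h.2.2]
      have t0 : Norm.norm (β i 0) ^ 2 * Norm.norm (β' i 0) ^ 2
          ≤ 99 / 100 * Norm.norm (β' i 0) ^ 2 := mul_le_mul_of_nonneg_right h0.le hc0
      have t1 : Norm.norm (β i 1) ^ 2 * Norm.norm (β' i 1) ^ 2
          ≤ 99 / 100 * Norm.norm (β' i 1) ^ 2 := mul_le_mul_of_nonneg_right h1.le hc1
      have t2 : Norm.norm (β i 2) ^ 2 * Norm.norm (β' i 2) ^ 2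
          ≤ 99 / 100 * Norm.norm (β' i 2) ^ 2 := mul_le_mul_of_nonneg_right h2.le hc2
      rcases hc3 with h | h | h
      · have td : (99 / 100 - Norm.norm (β i 0) ^ 2) * (1 / 3)
            ≤ (99 / 100 - Norm.norm (β i 0) ^ 2) * Norm.norm (β' i 0) ^ 2 :=
          mul_le_mul_of_nonneg_left h (by linarith)
        linarith only [t0, t1, t2, td, HC, hs, h0]
      · have td : (99 / 100 - Norm.norm (β i 1) ^ 2) * (1 / 3)
            ≤ (99 / 100 - Norm.norm (β i 1) ^ 2) * Norm.norm (β' i 1) ^ 2 :=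
          mul_le_mul_of_nonneg_left h (by linarith)
        linarith only [t0, t1, t2, td, HC, hs, h1]
      · have td : (99 / 100 - Norm.norm (β i 2) ^ 2) * (1 / 3)
            ≤ (99 / 100 - Norm.norm (β i 2) ^ 2) * Norm.norm (β' i 2) ^ 2 :=
          mul_le_mul_of_nonneg_left h (by linarith)
        linarith only [t0, t1, t2, td, HC, hs, h2]
    rcases hmax with h | h | h
    · exact key3 _ _ _ HB h
    · have h3 := key3 (β i 1) (β i 0) (β i 2) (by linarith) h
      rwa [show β i 1 + β i 0 + β i 2 = β i 0 + β i 1 + β i 2 from by ring] at h3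
    · have h3 := key3 (β i 2) (β i 0) (β i 1) (by linarith) h
      rwa [show β i 2 + β i 0 + β i 1 = β i 0 + β i 1 + β i 2 from by ring] at h3
  -- conclusion
  have hsplit := Finset.sum_filter_add_sum_filter_not Finset.univ p
    (fun i => Norm.norm (α i) ^ 2 * (1 / 3) * Norm.norm (β i 0 + β i 1 + β i 2) ^ 2)
  have hB0 : 0 ≤ ∑ i ∈ Finset.univ.filter p,
      Norm.norm (α i) ^ 2 * (1 / 3) * Norm.norm (β i 0 + β i 1 + β i 2) ^ 2 :=
    Finset.sum_nonneg fun i _ => by positivity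
  have hGf : ∑ i ∈ Finset.univ.filter (fun i => ¬ p i),
        Norm.norm (α i) ^ 2 * (7 / 30)
      ≤ ∑ i ∈ Finset.univ.filter (fun i => ¬ p i),
        Norm.norm (α i) ^ 2 * (1 / 3) * Norm.norm (β i 0 + β i 1 + β i 2) ^ 2 := by
    refine Finset.sum_le_sum fun i hi => ?_
    have h7 := hgood_i i (Finset.mem_filter.mp hi).2
    nlinarith [sq_nonneg (Norm.norm (α i))]
  rw [← Finset.sum_mul] at hGf
  have : (149 / 150 : ℝ) * (7 / 30) ≤ ∑ i ∈ Finset.univ.filter (fun i => ¬ p i),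
      Norm.norm (α i) ^ 2 * (1 / 3) * Norm.norm (β i 0 + β i 1 + β i 2) ^ 2 := by
    refine le_trans ?_ hGf
    nlinarith [hGsum]
  rw [ge_iff_le, ← hsplit]
  linarith
end

section
/- Let m ≥ 1 and let ξ = Σ_{i<m} γ_i e_i ∈ ℂ^m be a unit vector. Let u_m = (1/√m) Σ_{i<m} e_i be the uniform superposition. If there exists k < m with |γ_k|² < 1/(2m), then 1 − |⟨u_m, ξ⟩|² ≥ 1/(16m²). In other words, measuring ξ with the two-outcome projective measurement {u_m u_m*, I − u_m u_m*} yields the second outcome with probability at least 1/(16m²). -/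
lemma far_core (M t B : ℝ) (hM : 2 ≤ M) (ht : 0 ≤ t) (hB : 0 ≤ B)
    (ht2 : t^2 ≤ 1/(2*M)) (hB2 : B^2 ≤ (M-1)*(1-t^2)) :
    1 - (t+B)^2/M ≥ 1/(16*M^2) := by
  have hM0 : (0:ℝ) < M := by linarith
  have ht2' : 2*M*t^2 ≤ 1 := by
    rw [le_div_iff₀ (by linarith)] at ht2; linarith
  have key : (M-1) * (4*M*(t+B)^2) ≤ (M-1) * (4*M^2 - 1) := by
    nlinarith [sq_nonneg (2*(M-1)*t - B),
      mul_nonneg (mul_nonneg (by linarith : (0:ℝ) ≤ M - 1) (by linarith : (0:ℝ) ≤ 2*M - 1))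
        (by linarith : (0:ℝ) ≤ 1 - 2*M*t^2),
      mul_nonneg (by linarith : (0:ℝ) ≤ 2*M - 1)
        (by linarith : (0:ℝ) ≤ (M-1)*(1-t^2) - B^2)]
  have key2 : 4*M*(t+B)^2 ≤ 4*M^2 - 1 :=
    le_of_mul_le_mul_left key (by linarith)
  have h4 : (t+B)^2/M ≤ (4*M^2-1)/(4*M^2) := by
    rw [div_le_div_iff₀ hM0 (by positivity)]; nlinarith [key2]
  have h6 : (4*M^2-1)/(4*M^2) = 1 - 1/(4*M^2) := by field_simp
  have h5 : 1/(16*M^2) ≤ 1/(4*M^2) := by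
    apply one_div_le_one_div_of_le (by positivity); nlinarith
  rw [h6] at h4; linarith

/-- **Lemma 2.8 of Blier–Tapp.**
Let `ξ = Σ_i γ_i e_i ∈ ℂ^m` be a unit vector and `u_m` the uniform
superposition, so that `⟨u_m, ξ⟩ = (1/√m) Σ_i γ_i`. If some amplitude
satisfies `|γ_k|² < 1/(2m)`, then measuring `ξ` with `{u_m u_m*, I − u_m u_m*}`
yields the second outcome with probability
`1 − |⟨u_m, ξ⟩|² ≥ 1/(16 m²)`. -/
theorem far_from_uniform (m : ℕ) (hm : 1 ≤ m) (γ : Fin m → ℂ)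
    (hγ : ∑ i, ‖γ i‖ ^ 2 = 1)
    (hk : ∃ k : Fin m, ‖γ k‖ ^ 2 < 1 / (2 * (m : ℝ))) :
    1 - ‖((Real.sqrt m : ℂ))⁻¹ * ∑ i, γ i‖ ^ 2
      ≥ 1 / (16 * (m : ℝ) ^ 2) := by
  obtain ⟨k, hk⟩ := hk
  set t := ‖γ k‖ with htdef
  set B := ∑ i ∈ Finset.univ.erase k, ‖γ i‖ with hBdef
  have ht0 : 0 ≤ t := norm_nonneg _
  have hB0 : 0 ≤ B := Finset.sum_nonneg fun i _ => norm_nonneg _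
  have hsplit : B + t = ∑ i, ‖γ i‖ :=
    Finset.sum_erase_add _ _ (Finset.mem_univ k)
  have hsplit2 : (∑ i ∈ Finset.univ.erase k, ‖γ i‖ ^ 2) + t^2 = 1 := by
    rw [Finset.sum_erase_add _ _ (Finset.mem_univ k)]; exact hγ
  -- m = 1 is impossible
  rcases eq_or_lt_of_le hm with h1 | h2
  · exfalso
    have : (Finset.univ.erase k : Finset (Fin m)) = ∅ := by
      have hc : (Finset.univ.erase k).card = 0 := by
        rw [Finset.card_erase_of_mem (Finset.mem_univ k), Finset.card_univ,
          Fintype.card_fin, ← h1]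
      exact Finset.card_eq_zero.mp hc
    rw [this, Finset.sum_empty, zero_add] at hsplit2
    rw [← h1] at hk
    norm_num [hsplit2] at hk
  have hm2 : (2:ℝ) ≤ (m:ℝ) := by exact_mod_cast h2
  have hM0 : (0:ℝ) < (m:ℝ) := by linarith
  -- bound B² via Cauchy–Schwarz
  have hcard : ((Finset.univ.erase k).card : ℝ) = (m:ℝ) - 1 := by
    rw [Finset.card_erase_of_mem (Finset.mem_univ k), Finset.card_univ, Fintype.card_fin]
    push_cast [Nat.cast_sub hm]
    ring
  have hB2 : B^2 ≤ ((m:ℝ) - 1) * (1 - t^2) := by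
    have := sq_sum_le_card_mul_sum_sq
      (s := Finset.univ.erase k) (f := fun i => ‖γ i‖)
    rw [hcard] at this
    calc B^2 ≤ ((m:ℝ)-1) * ∑ i ∈ Finset.univ.erase k, ‖γ i‖ ^ 2 := this
      _ = ((m:ℝ)-1) * (1 - t^2) := by rw [show (∑ i ∈ Finset.univ.erase k,
            ‖γ i‖ ^ 2) = 1 - t^2 by linarith]
  -- the measured amplitude
  have hsq : Real.sqrt m ≠ 0 := by positivity
  have habs : ‖((Real.sqrt m : ℂ))⁻¹ * ∑ i, γ i‖
      = (Real.sqrt m)⁻¹ * ‖∑ i, γ i‖ := by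
    rw [norm_mul, norm_inv, Complex.norm_real, Real.norm_eq_abs, abs_of_nonneg (Real.sqrt_nonneg _)]
  have hSle : ‖∑ i, γ i‖ ≤ t + B := by
    calc ‖∑ i, γ i‖ ≤ ∑ i, ‖γ i‖ :=
          norm_sum_le _ _
      _ = t + B := by linarith
  have hexp : ‖((Real.sqrt m : ℂ))⁻¹ * ∑ i, γ i‖ ^ 2
      = ‖∑ i, γ i‖ ^ 2 / (m:ℝ) := by
    rw [habs, mul_pow, inv_pow, Real.sq_sqrt hM0.le, div_eq_inv_mul]
  have hS0 : 0 ≤ ‖∑ i, γ i‖ := norm_nonneg _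
  have hsqle : ‖∑ i, γ i‖ ^ 2 ≤ (t + B)^2 := by
    apply pow_le_pow_left₀ hS0 hSle
  have hcore := far_core (m:ℝ) t B hm2 ht0 hB0 hk.le hB2
  rw [ge_iff_le, hexp]
  have hdiv : ‖∑ i, γ i‖ ^ 2 / (m:ℝ) ≤ (t+B)^2 / (m:ℝ) := by
    gcongr
  linarith
end

section
/- Let m ≥ 1 and set ε = 10⁻¹⁰ · m⁻². Let ψ, φ ∈ ℂ^m ⊗ ℂ³ be unit vectors in decomposed form with amplitudes (α_i, β_{i,j}) and (α'_i, β'_{i,j}) respectively. Suppose R_eq = 1 − ½(1 + |⟨ψ, φ⟩|²) ≤ ε, R_sv = Σ_{i<m} Σ_{j≠j'} |α_i|² |β_{i,j}|² |α'_i|² |β'_{i,j'}|² ≤ ε, and the uniformity rejection probability R_unif(ψ) = ‖((I_m − u_m u_m*) ⊗ u₃u₃*) ψ‖² ≤ ε. Then for every i < m, |α_i|² ≥ 1/(100m). -/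
open Finset

section Helpers

private lemma variance_identity' (m : ℕ) (hm : 1 ≤ m) (f : Fin m → ℂ) :
    ∑ i, ‖f i - (∑ k, f k) / (m : ℂ)‖ ^ 2
      = ∑ i, ‖f i‖ ^ 2 - ‖∑ k, f k‖ ^ 2 / (m : ℝ) := by
  have hm0 : (m : ℝ) ≠ 0 := by positivity
  have hmc : (m : ℂ) ≠ 0 := by exact_mod_cast Nat.cast_ne_zero.mpr (by omega)
  set F : ℂ := ∑ k, f k with hF
  have key : ∀ i : Fin m, ‖f i - F / m‖ ^ 2
      = ‖f i‖ ^ 2 + Complex.normSq F / m^2 - 2 * (f i * (starRingEnd ℂ) (F / m)).re := by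
    intro i
    rw [Complex.sq_norm, Complex.sq_norm, Complex.normSq_sub]
    have : Complex.normSq (F / m) = Complex.normSq F / m^2 := by
      rw [Complex.normSq_div]
      rw [Complex.normSq_natCast]
      ring
    rw [this]
  rw [Finset.sum_congr rfl (fun i _ => key i)]
  rw [Finset.sum_sub_distrib, Finset.sum_add_distrib, Finset.sum_const,
    ← Finset.mul_sum, ← Complex.re_sum, ← Finset.sum_mul, ← hF]
  have h1 : (F * (starRingEnd ℂ) (F / m)).re = Complex.normSq F / m := by
    have : F * (starRingEnd ℂ) (F / m) = ((Complex.normSq F / m : ℝ) : ℂ) := by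
      rw [map_div₀, Complex.conj_natCast]
      rw [div_eq_mul_inv, ← mul_assoc, Complex.mul_conj]
      push_cast
      ring
    rw [this, Complex.ofReal_re]
  rw [h1, Complex.sq_norm, Finset.card_univ, Fintype.card_fin, nsmul_eq_mul]
  field_simp
  ring

set_option maxHeartbeats 1000000 in
private lemma key3_core' (x0 y0 E D s : ℝ)
    (hx0 : 0 ≤ x0) (hx01 : x0 ^ 2 ≤ 1) (hx03 : 1 / 3 ≤ x0 ^ 2)
    (hE0 : 0 ≤ E) (hE2 : E ^ 2 ≤ 2 * (1 - x0 ^ 2))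
    (hy : y0 ^ 2 ≤ 1)
    (hD0 : 0 ≤ D) (hD1 : x0 ^ 2 * (1 - y0 ^ 2) ≤ D) (hD2 : (1 - x0 ^ 2) * y0 ^ 2 ≤ D)
    (hs0 : 0 ≤ s) (hs : x0 - E ≤ s) :
    1 - 4 * Real.sqrt (6 * D) ≤ s ^ 2 := by
  set r := Real.sqrt (6 * D) with hrdef
  have hr0 : 0 ≤ r := Real.sqrt_nonneg _
  have hr2 : r ^ 2 = 6 * D := Real.sq_sqrt (by linarith)
  rcases le_or_gt 1 (4 * r) with h | h
  · linarith [sq_nonneg s]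
  · have hy0 : (0:ℝ) ≤ 1 - y0 ^ 2 := by linarith
    have hy2 : 1 / 2 ≤ y0 ^ 2 := by
      have h1 : (1/3 : ℝ) * (1 - y0 ^ 2) ≤ x0 ^ 2 * (1 - y0 ^ 2) :=
        mul_le_mul_of_nonneg_right hx03 hy0
      nlinarith
    have hx0' : (0:ℝ) ≤ 1 - x0 ^ 2 := by linarith
    have hδ : 1 - x0 ^ 2 ≤ r ^ 2 / 3 := by
      have h1 : (1 - x0 ^ 2) * (1/2) ≤ (1 - x0 ^ 2) * y0 ^ 2 :=
        mul_le_mul_of_nonneg_left hy2 hx0'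
      nlinarith
    have hEr : E ≤ r := by nlinarith [sq_nonneg (E - r), sq_nonneg (E + r)]
    have hxE : 0 ≤ x0 - E := by nlinarith
    have hsq : (x0 - E) ^ 2 ≤ s ^ 2 := by
      have := mul_self_le_mul_self hxE (le_trans hs (le_refl s))
      nlinarith
    have h5 : x0 ^ 2 - 2 * E ≤ (x0 - E) ^ 2 := by nlinarith [sq_nonneg E, mul_nonneg hE0 hx0]
    have h6 : 1 - r ^ 2 / 3 - 2 * r ≤ x0 ^ 2 - 2 * E := by linarith
    have h7 : 1 - 4 * r ≤ 1 - r ^ 2 / 3 - 2 * r := by nlinarith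
    linarith

private lemma key3' (b c : Fin 3 → ℂ) (hb : ∑ j, ‖b j‖ ^ 2 = 1)
    (hc : ∑ j, ‖c j‖ ^ 2 = 1) :
    1 - 4 * Real.sqrt (6 * ∑ j, ∑ j', (if j = j' then (0:ℝ) else
        ‖b j‖ ^ 2 * ‖c j'‖ ^ 2))
      ≤ ‖∑ j, b j‖ ^ 2 := by
  set x : Fin 3 → ℝ := fun j => ‖b j‖ with hx
  set y : Fin 3 → ℝ := fun j => ‖c j‖ with hy
  set D : ℝ := ∑ j, ∑ j', (if j = j' then (0:ℝ) else x j ^ 2 * y j' ^ 2) with hD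
  obtain ⟨j₀, -, hmax⟩ := Finset.exists_max_image (univ : Finset (Fin 3)) x ⟨0, mem_univ 0⟩
  have hxn : ∀ j, 0 ≤ x j := fun j => norm_nonneg _
  have hyn : ∀ j, 0 ≤ y j := fun j => norm_nonneg _
  have erase_sum : ∀ g : Fin 3 → ℝ, ∑ j' ∈ univ.erase j₀, g j' = (∑ j', g j') - g j₀ := by
    intro g
    rw [← Finset.add_sum_erase _ g (mem_univ j₀)]
    ring
  have ite_sum : ∀ g : Fin 3 → ℝ, (∑ j', if j₀ = j' then (0:ℝ) else g j')
      = (∑ j', g j') - g j₀ := by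
    intro g
    rw [← Finset.add_sum_erase _ _ (mem_univ j₀), if_pos rfl, zero_add,
      Finset.sum_congr rfl (fun j hj => if_neg (Finset.ne_of_mem_erase hj).symm), erase_sum]
  have card_erase : (univ.erase j₀).card = 2 := by
    rw [Finset.card_erase_of_mem (mem_univ j₀)]
    simp
  have hx01 : x j₀ ^ 2 ≤ 1 := by
    rw [← hb]
    exact Finset.single_le_sum (fun j _ => sq_nonneg (x j)) (mem_univ j₀)
  have hx03 : 1 / 3 ≤ x j₀ ^ 2 := by
    have : ∑ j, x j ^ 2 ≤ 3 * x j₀ ^ 2 := by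
      calc ∑ j, x j ^ 2 ≤ ∑ _j : Fin 3, x j₀ ^ 2 :=
            Finset.sum_le_sum (fun j _ => pow_le_pow_left₀ (hxn j) (hmax j (mem_univ j)) 2)
        _ = 3 * x j₀ ^ 2 := by simp [Finset.sum_const]
    rw [hb] at this
    linarith
  set E : ℝ := ∑ j' ∈ univ.erase j₀, x j' with hE
  have hE0 : 0 ≤ E := Finset.sum_nonneg (fun j _ => hxn j)
  have hE2 : E ^ 2 ≤ 2 * (1 - x j₀ ^ 2) := by
    have h1 := Finset.sum_mul_sq_le_sq_mul_sq (univ.erase j₀) (fun _ => (1:ℝ)) x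
    simp only [one_mul, one_pow, Finset.sum_const, card_erase, nsmul_eq_mul] at h1
    rw [erase_sum x, erase_sum (fun j => x j ^ 2), hb] at h1
    have : E ^ 2 ≤ 2 * (1 - x j₀ ^ 2) := by
      rw [hE, erase_sum x]
      push_cast at h1 ⊢
      linarith
    exact this
  have hD0 : 0 ≤ D := Finset.sum_nonneg fun j _ => Finset.sum_nonneg fun j' _ => by
    split <;> positivity
  have inner_nonneg : ∀ j : Fin 3, (0:ℝ) ≤ ∑ j', (if j = j' then (0:ℝ) else x j ^ 2 * y j' ^ 2) :=
    fun j => Finset.sum_nonneg fun j' _ => by split <;> positivity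
  have hD1 : x j₀ ^ 2 * (1 - y j₀ ^ 2) ≤ D := by
    have h1 : (∑ j', if j₀ = j' then (0:ℝ) else x j₀ ^ 2 * y j' ^ 2) ≤ D :=
      Finset.single_le_sum (fun j _ => inner_nonneg j) (mem_univ j₀)
    rw [ite_sum (fun j' => x j₀ ^ 2 * y j' ^ 2)] at h1
    rw [← Finset.mul_sum, hc] at h1
    linarith [h1]
  have hD2 : (1 - x j₀ ^ 2) * y j₀ ^ 2 ≤ D := by
    have h1 : ∀ j : Fin 3, (if j = j₀ then (0:ℝ) else x j ^ 2 * y j₀ ^ 2)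
        ≤ ∑ j', (if j = j' then (0:ℝ) else x j ^ 2 * y j' ^ 2) := fun j =>
      Finset.single_le_sum (f := fun j' => if j = j' then (0:ℝ) else x j ^ 2 * y j' ^ 2)
        (fun j' _ => by
          show (0:ℝ) ≤ if j = j' then (0:ℝ) else x j ^ 2 * y j' ^ 2
          split <;> positivity) (mem_univ j₀)
    have h2 : ∑ j, (if j = j₀ then (0:ℝ) else x j ^ 2 * y j₀ ^ 2) ≤ D :=
      Finset.sum_le_sum (fun j _ => h1 j)
    have h3 : (∑ j, if j = j₀ then (0:ℝ) else x j ^ 2 * y j₀ ^ 2)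
        = (∑ j, x j ^ 2 * y j₀ ^ 2) - x j₀ ^ 2 * y j₀ ^ 2 := by
      have := ite_sum (fun j => x j ^ 2 * y j₀ ^ 2)
      rw [← this]
      refine Finset.sum_congr rfl (fun j _ => ?_)
      by_cases h : j = j₀
      · simp [h]
      · rw [if_neg h, if_neg (fun hh => h hh.symm)]
    rw [h3, ← Finset.sum_mul, hb] at h2
    linarith [h2]
  have hy1 : y j₀ ^ 2 ≤ 1 := by
    rw [← hc]
    exact Finset.single_le_sum (fun j _ => sq_nonneg (y j)) (mem_univ j₀)
  have hs : x j₀ - E ≤ ‖∑ j, b j‖ := by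
    have h1 : b j₀ = (∑ j, b j) - ∑ j' ∈ univ.erase j₀, b j' := by
      rw [← Finset.add_sum_erase _ b (mem_univ j₀)]
      ring
    have h2 : x j₀ ≤ ‖∑ j, b j‖ + ‖∑ j' ∈ univ.erase j₀, b j'‖ := by
      show ‖b j₀‖ ≤ _
      rw [h1, sub_eq_add_neg]
      calc ‖(∑ j, b j) + -∑ j' ∈ univ.erase j₀, b j'‖
          ≤ ‖∑ j, b j‖ + ‖-∑ j' ∈ univ.erase j₀, b j'‖ :=
            norm_add_le _ _
        _ = _ := by rw [norm_neg]
    have h3 : ‖∑ j' ∈ univ.erase j₀, b j'‖ ≤ E :=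
      (norm_sum_le _ _).trans (le_of_eq rfl)
    linarith
  exact key3_core' (x j₀) (y j₀) E D (‖∑ j, b j‖) (hxn j₀) hx01 hx03 hE0 hE2 hy1
    hD0 hD1 hD2 (norm_nonneg _) hs

private lemma light_heavy' (aa aa' d θ e : ℝ) (h0a : 0 ≤ aa) (h0a' : 0 ≤ aa')
    (hd0 : 0 ≤ d) (hd1 : d ≤ 1) (hθ0 : 0 < θ)
    (hcl : (aa - aa') ^ 2 ≤ 4 * e) (h16 : 16 * e ≤ θ) :
    aa ^ 2 * d ≤ θ + (4 / θ) * ((aa ^ 2 * aa' ^ 2) * d) := by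
  rcases le_or_gt (aa ^ 2) θ with hc | hc
  · have h1 : aa ^ 2 * d ≤ θ := by nlinarith
    have h2 : 0 ≤ (4 / θ) * ((aa ^ 2 * aa' ^ 2) * d) := by positivity
    linarith
  · have hw' : θ / 4 ≤ aa' ^ 2 := by nlinarith [sq_nonneg (aa - 2 * aa')]
    have h5 : aa ^ 2 * d ≤ (4 / θ) * ((aa ^ 2 * aa' ^ 2) * d) := by
      rw [div_mul_eq_mul_div, le_div_iff₀ hθ0]
      nlinarith [mul_le_mul_of_nonneg_left hw' (mul_nonneg (sq_nonneg aa) hd0)]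
    linarith


set_option maxHeartbeats 1000000 in
private lemma endgame' (A X q P M : ℝ)
    (hA0 : 0 ≤ A) (hX0 : 0 ≤ X) (hq0 : 0 ≤ q) (hP0 : 0 ≤ P) (hM : 1 ≤ M)
    (hA1 : A ^ 2 ≤ 1) (hX2 : X ^ 2 ≤ 3)
    (hP2 : 27 / 100 / M ≤ P ^ 2)
    (hq2 : q ^ 2 ≤ 3 / (10 ^ 10 * M ^ 2))
    (hP : P ≤ A * X + q) :
    1 / (100 * M) ≤ A ^ 2 := by
  have hM0 : (0:ℝ) < M := by linarith
  have haX : A * X ≤ 2 := by nlinarith [sq_nonneg (A * X - 2), mul_nonneg hA0 hX0]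
  have hPsq : P * P ≤ (A * X + q) * (A * X + q) := mul_self_le_mul_self hP0 hP
  have haX2 : A ^ 2 * X ^ 2 ≤ 3 * A ^ 2 := by nlinarith [sq_nonneg A]
  have h2aXq : (A * X) * q ≤ 2 * q := mul_le_mul_of_nonneg_right haX hq0
  have hqm2 : (q * M) ^ 2 ≤ (2 / 100000) ^ 2 := by
    have h1 := mul_le_mul_of_nonneg_right hq2 (sq_nonneg M)
    have hM0' : M ^ 2 ≠ 0 := by positivity
    have h2 : 3 / (10 ^ 10 * M ^ 2) * M ^ 2 = 3 / 10 ^ 10 := by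
      field_simp
    rw [h2] at h1
    calc (q * M) ^ 2 = q ^ 2 * M ^ 2 := by ring
      _ ≤ 3 / 10 ^ 10 := h1
      _ ≤ (2 / 100000) ^ 2 := by norm_num
  have c6 : q * M ≤ 2 / 100000 := by
    nlinarith [mul_nonneg hq0 hM0.le]
  have hq_le_qm : q ≤ q * M := by nlinarith [mul_le_mul_of_nonneg_left hM hq0]
  have c7 : q ^ 2 * M ≤ 4 / 10 ^ 10 := by
    nlinarith [mul_le_mul_of_nonneg_left c6 hq0]
  have c1 : 27 / 100 ≤ (P * P) * M := by
    rw [div_le_iff₀ hM0] at hP2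
    nlinarith [hP2]
  have c2 : (P * P) * M ≤ ((A * X + q) * (A * X + q)) * M :=
    mul_le_mul_of_nonneg_right hPsq hM0.le
  have c4 : (A ^ 2 * X ^ 2) * M ≤ (3 * A ^ 2) * M :=
    mul_le_mul_of_nonneg_right haX2 hM0.le
  have c5 : ((A * X) * q) * M ≤ (2 * q) * M :=
    mul_le_mul_of_nonneg_right h2aXq hM0.le
  rw [div_le_iff₀ (by positivity)]
  nlinarith [c1, c2, c4, c5, c6, c7]

end Helpers

set_option maxHeartbeats 1600000 in
/-- **Lemma (all vertices appear with large amplitude).**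
Set `ε = 10⁻¹⁰ m⁻²`. If the equality-test rejection probability `R_eq`, the
same-vertex rejection probability `R_sv`, and the uniformity-test rejection
probability `R_unif(ψ) = ‖((I_m − u_m u_m*) ⊗ u₃u₃*) ψ‖²` are all at most `ε`,
then every vertex amplitude satisfies `|α_i|² ≥ 1/(100 m)`. Here
`((I_m − u_m u_m*) ⊗ u₃u₃*) ψ` has coordinates
`(i, j) ↦ (1/3) α_i (Σ_{j'} β_{i,j'}) − (1/(3m)) Σ_{i'} α_{i'} (Σ_{j'} β_{i',j'})`. -/
theorem all_vertices_appear (m : ℕ) (hm : 1 ≤ m)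
    (α α' : Fin m → ℂ) (β β' : Fin m → Fin 3 → ℂ)
    (hα : ∑ i, ‖α i‖ ^ 2 = 1)
    (hα' : ∑ i, ‖α' i‖ ^ 2 = 1)
    (hβ : ∀ i, ∑ j, ‖β i j‖ ^ 2 = 1)
    (hβ' : ∀ i, ∑ j, ‖β' i j‖ ^ 2 = 1)
    (hReq : 1 - (1 / 2 : ℝ) * (1 +
        ‖∑ i, ∑ j, (starRingEnd ℂ) (α i * β i j) * (α' i * β' i j)‖ ^ 2)
      ≤ 1 / (10 ^ 10 * (m : ℝ) ^ 2))
    (hRsv : ∑ i, ∑ j, ∑ j', (if j = j' then 0 else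
        ‖α i‖ ^ 2 * ‖β i j‖ ^ 2 *
          ‖α' i‖ ^ 2 * ‖β' i j'‖ ^ 2)
      ≤ 1 / (10 ^ 10 * (m : ℝ) ^ 2))
    (hRunif : ‖toEuc (fun q : Fin m × Fin 3 =>
          (1 / 3 : ℂ) * (α q.1 * ∑ j', β q.1 j')
            - (1 / (3 * (m : ℂ))) * ∑ i', (α i' * ∑ j', β i' j'))‖ ^ 2
      ≤ 1 / (10 ^ 10 * (m : ℝ) ^ 2)) :
    ∀ i : Fin m, ‖α i‖ ^ 2 ≥ 1 / (100 * (m : ℝ)) := by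
  intro i
  set e : ℝ := 1 / (10 ^ 10 * (m : ℝ) ^ 2) with he
  have hm1 : (1:ℝ) ≤ (m:ℝ) := by exact_mod_cast hm
  have hm0 : (0:ℝ) < (m:ℝ) := by linarith
  have hmc : (m : ℂ) ≠ 0 := by
    simp only [ne_eq, Nat.cast_eq_zero]
    omega
  have he0 : 0 < e := by positivity
  set a : Fin m → ℝ := fun k => ‖α k‖ with ha
  set a' : Fin m → ℝ := fun k => ‖α' k‖ with ha'
  set x : Fin m → Fin 3 → ℝ := fun k j => ‖β k j‖ with hx
  set y : Fin m → Fin 3 → ℝ := fun k j => ‖β' k j‖ with hy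
  -- Step 1 : closeness of amplitudes, from the equality test
  have hg1 : ∀ k, ∑ j, x k j * y k j ≤ 1 := by
    intro k
    have h := Finset.sum_mul_sq_le_sq_mul_sq univ (x k) (y k)
    have h2 : ∑ j, x k j ^ 2 = 1 := hβ k
    have h3 : ∑ j, y k j ^ 2 = 1 := hβ' k
    rw [h2, h3] at h
    have h4 : 0 ≤ ∑ j, x k j * y k j :=
      Finset.sum_nonneg fun j _ => mul_nonneg (norm_nonneg _) (norm_nonneg _)
    nlinarith
  have hAle : ‖∑ k, ∑ j, (starRingEnd ℂ) (α k * β k j) * (α' k * β' k j)‖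
      ≤ ∑ k, a k * a' k := by
    calc ‖∑ k, ∑ j, (starRingEnd ℂ) (α k * β k j) * (α' k * β' k j)‖
        ≤ ∑ k, ‖∑ j, (starRingEnd ℂ) (α k * β k j) * (α' k * β' k j)‖ :=
          norm_sum_le _ _
      _ ≤ ∑ k, a k * a' k := Finset.sum_le_sum fun k _ => by
          calc ‖∑ j, (starRingEnd ℂ) (α k * β k j) * (α' k * β' k j)‖
              ≤ ∑ j, ‖(starRingEnd ℂ) (α k * β k j) * (α' k * β' k j)‖ :=
                norm_sum_le _ _
            _ = ∑ j, (a k * a' k) * (x k j * y k j) := Finset.sum_congr rfl fun j _ => by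
                rw [norm_mul, Complex.norm_conj, norm_mul, norm_mul]
                ring
            _ = (a k * a' k) * ∑ j, x k j * y k j := by rw [Finset.mul_sum]
            _ ≤ (a k * a' k) * 1 := by
                apply mul_le_mul_of_nonneg_left (hg1 k)
                exact mul_nonneg (norm_nonneg _) (norm_nonneg _)
            _ = a k * a' k := mul_one _
  have hS1 : ∑ k, a k * a' k ≤ 1 := by
    have h := Finset.sum_mul_sq_le_sq_mul_sq univ a a'
    rw [hα, hα'] at h
    have h4 : 0 ≤ ∑ k, a k * a' k :=
      Finset.sum_nonneg fun k _ => mul_nonneg (norm_nonneg _) (norm_nonneg _)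
    nlinarith
  have hS : 1 - 2 * e ≤ ∑ k, a k * a' k := by
    have hA2 : 1 - 2 * e ≤ ‖∑ k, ∑ j,
        (starRingEnd ℂ) (α k * β k j) * (α' k * β' k j)‖ ^ 2 := by linarith
    have hA0 : 0 ≤ ‖∑ k, ∑ j,
        (starRingEnd ℂ) (α k * β k j) * (α' k * β' k j)‖ := norm_nonneg _
    nlinarith
  have hclose : ∀ k, (a k - a' k) ^ 2 ≤ 4 * e := by
    intro k
    have h1 : ∑ k, (a k - a' k) ^ 2 ≤ 4 * e := by
      have h0 : ∀ k : Fin m, (a k - a' k) ^ 2 = a k ^ 2 + a' k ^ 2 - 2 * (a k * a' k) :=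
        fun k => by ring
      rw [Finset.sum_congr rfl fun k _ => h0 k, Finset.sum_sub_distrib,
        Finset.sum_add_distrib, ← Finset.mul_sum, hα, hα']
      linarith
    exact le_trans (Finset.single_le_sum (f := fun k => (a k - a' k) ^ 2)
      (fun k _ => sq_nonneg _) (mem_univ k)) h1
  -- Step 2 : the same-vertex test, rewritten
  set D : Fin m → ℝ := fun k => ∑ j, ∑ j', (if j = j' then (0:ℝ) else
      ‖β k j‖ ^ 2 * ‖β' k j'‖ ^ 2) with hD
  have hD0 : ∀ k, 0 ≤ D k := fun k => Finset.sum_nonneg fun j _ => Finset.sum_nonneg fun j' _ => by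
    split <;> positivity
  have hD1 : ∀ k, D k ≤ 1 := by
    intro k
    have h1 : D k ≤ ∑ j, ∑ j', ‖β k j‖ ^ 2 * ‖β' k j'‖ ^ 2 := by
      apply Finset.sum_le_sum
      intro j _
      apply Finset.sum_le_sum
      intro j' _
      split
      · positivity
      · exact le_rfl
    have h2 : ∑ j, ∑ j', ‖β k j‖ ^ 2 * ‖β' k j'‖ ^ 2 = 1 := by
      rw [← Finset.sum_mul_sum]
      rw [hβ k, hβ' k, one_mul]
    linarith
  have hRsv' : ∑ k, (a k ^ 2 * a' k ^ 2) * D k ≤ e := by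
    have h1 : ∀ k : Fin m, (a k ^ 2 * a' k ^ 2) * D k
        = ∑ j, ∑ j', (if j = j' then 0 else
          ‖α k‖ ^ 2 * ‖β k j‖ ^ 2 *
            ‖α' k‖ ^ 2 * ‖β' k j'‖ ^ 2) := by
      intro k
      rw [hD]
      simp only [Finset.mul_sum, mul_ite, mul_zero]
      exact Finset.sum_congr rfl fun j _ => Finset.sum_congr rfl fun j' _ => by
        split
        · rfl
        · ring
    rw [Finset.sum_congr rfl fun k _ => h1 k]
    exact hRsv
  -- Step 3 : heavy/light decomposition
  set θ : ℝ := 1 / (200 * (m:ℝ)) with hθ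
  have hθ0 : 0 < θ := by positivity
  have h16e : 16 * e ≤ θ := by
    rw [he, hθ, mul_one_div, div_le_div_iff₀ (by positivity) (by positivity)]
    nlinarith
  have hptwise : ∀ k, a k ^ 2 * D k ≤ θ + (4 / θ) * ((a k ^ 2 * a' k ^ 2) * D k) := by
    intro k
    exact light_heavy' (a k) (a' k) (D k) θ e (norm_nonneg _) (norm_nonneg _)
      (hD0 k) (hD1 k) hθ0 (hclose k) h16e
  have hsum : ∑ k, a k ^ 2 * D k ≤ m * θ + (4 / θ) * e := by
    calc ∑ k, a k ^ 2 * D k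
        ≤ ∑ k, (θ + (4 / θ) * ((a k ^ 2 * a' k ^ 2) * D k)) :=
          Finset.sum_le_sum fun k _ => hptwise k
      _ = m * θ + (4 / θ) * ∑ k, (a k ^ 2 * a' k ^ 2) * D k := by
          rw [Finset.sum_add_distrib, Finset.sum_const, ← Finset.mul_sum]
          simp [nsmul_eq_mul]
      _ ≤ m * θ + (4 / θ) * e := by
          have : 0 < 4 / θ := by positivity
          nlinarith [hRsv']
  have hsum51 : ∑ k, a k ^ 2 * D k ≤ 51 / 10000 := by
    have hfinal : (m:ℝ) * θ + (4 / θ) * e ≤ 51 / 10000 := by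
      rw [hθ, he]
      have h1 : (m:ℝ) * (1 / (200 * m)) = 1 / 200 := by field_simp
      have h2 : (4 / (1 / (200 * (m:ℝ)))) * (1 / (10 ^ 10 * (m : ℝ) ^ 2)) = 800 / (10 ^ 10 * m) := by
        field_simp
        ring
      rw [h1, h2]
      have h3 : 800 / (10 ^ 10 * (m:ℝ)) ≤ 800 / 10 ^ 10 := by
        rw [div_le_div_iff₀ (by positivity) (by norm_num)]
        nlinarith
      nlinarith
    linarith
  -- Step 4 : lower bound on the weighted sum of |s_k|²
  have hL : (28 : ℝ) / 100 ≤ ∑ k, a k ^ 2 * ‖∑ j, β k j‖ ^ 2 := by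
    have hkey : ∀ k, 1 - 4 * Real.sqrt (6 * D k) ≤ ‖∑ j, β k j‖ ^ 2 :=
      fun k => key3' (β k) (β' k) (hβ k) (hβ' k)
    set V : ℝ := ∑ k, a k ^ 2 * Real.sqrt (6 * D k) with hV
    have hV0 : 0 ≤ V := Finset.sum_nonneg fun k _ => by positivity
    have hVsq : V ^ 2 ≤ 6 * ∑ k, a k ^ 2 * D k := by
      have hcs := Finset.sum_mul_sq_le_sq_mul_sq univ a (fun k => a k * Real.sqrt (6 * D k))
      have h1 : ∀ k : Fin m, a k * (a k * Real.sqrt (6 * D k)) = a k ^ 2 * Real.sqrt (6 * D k) :=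
        fun k => by ring
      have h2 : ∀ k : Fin m, (a k * Real.sqrt (6 * D k)) ^ 2 = a k ^ 2 * (6 * D k) := by
        intro k
        rw [mul_pow, Real.sq_sqrt (by positivity)]
      rw [Finset.sum_congr rfl fun k _ => h1 k, Finset.sum_congr rfl fun k _ => h2 k, hα] at hcs
      calc V ^ 2 ≤ 1 * ∑ k, a k ^ 2 * (6 * D k) := hcs
        _ = 6 * ∑ k, a k ^ 2 * D k := by
            rw [one_mul, Finset.mul_sum]
            exact Finset.sum_congr rfl fun k _ => by ring
    have hV18 : V ≤ 18 / 100 := by nlinarith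
    have hL1 : 1 - 4 * V ≤ ∑ k, a k ^ 2 * ‖∑ j, β k j‖ ^ 2 := by
      have h1 : ∀ k : Fin m, a k ^ 2 * (1 - 4 * Real.sqrt (6 * D k))
          ≤ a k ^ 2 * ‖∑ j, β k j‖ ^ 2 :=
        fun k => mul_le_mul_of_nonneg_left (hkey k) (sq_nonneg _)
      have h2 : ∑ k, a k ^ 2 * (1 - 4 * Real.sqrt (6 * D k)) = (∑ k, a k ^ 2) - 4 * V := by
        rw [hV, Finset.mul_sum, ← Finset.sum_sub_distrib]
        exact Finset.sum_congr rfl fun k _ => by ring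
      rw [hα] at h2
      calc 1 - 4 * V = ∑ k, a k ^ 2 * (1 - 4 * Real.sqrt (6 * D k)) := h2.symm
        _ ≤ _ := Finset.sum_le_sum fun k _ => h1 k
    linarith
  -- Step 5 : the uniformity test
  set t : Fin m → ℂ := fun k => α k * ∑ j', β k j' with ht
  set T : ℂ := ∑ k, t k with hT
  have hnorm : ‖toEuc (fun q : Fin m × Fin 3 =>
        (1 / 3 : ℂ) * (α q.1 * ∑ j', β q.1 j')
          - (1 / (3 * (m : ℂ))) * ∑ i', (α i' * ∑ j', β i' j'))‖ ^ 2
      = ∑ q : Fin m × Fin 3, ‖(1 / 3 : ℂ) * (α q.1 * ∑ j', β q.1 j')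
          - (1 / (3 * (m : ℂ))) * ∑ i', (α i' * ∑ j', β i' j')‖ ^ 2 := by
    rw [EuclideanSpace.norm_eq]
    rw [Real.sq_sqrt (Finset.sum_nonneg fun q _ => by positivity)]
    exact Finset.sum_congr rfl fun q _ => by rfl
  have hterm : ∀ q : Fin m × Fin 3, ‖(1 / 3 : ℂ) * (α q.1 * ∑ j', β q.1 j')
          - (1 / (3 * (m : ℂ))) * ∑ i', (α i' * ∑ j', β i' j')‖ ^ 2
      = (1/9) * ‖t q.1 - T / (m:ℂ)‖ ^ 2 := by
    intro q
    have h1 : (1 / 3 : ℂ) * (α q.1 * ∑ j', β q.1 j')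
          - (1 / (3 * (m : ℂ))) * ∑ i', (α i' * ∑ j', β i' j')
        = (1/3 : ℂ) * (t q.1 - T / (m:ℂ)) := by
      rw [ht, hT]
      field_simp
      ring
    rw [h1, norm_mul]
    have : ‖(1/3 : ℂ)‖ = 1/3 := by norm_num
    rw [this]
    ring
  have hU : ∑ k, ‖t k - T / (m:ℂ)‖ ^ 2 ≤ 3 * e := by
    rw [hnorm] at hRunif
    rw [Finset.sum_congr rfl fun q _ => hterm q] at hRunif
    rw [Fintype.sum_prod_type] at hRunif
    have h3 : ∑ (k : Fin m), ∑ (_j : Fin 3), (1/9 : ℝ) * ‖t k - T / (m:ℂ)‖ ^ 2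
        = (1/3) * ∑ k, ‖t k - T / (m:ℂ)‖ ^ 2 := by
      rw [Finset.mul_sum]
      refine Finset.sum_congr rfl fun k _ => ?_
      rw [Finset.sum_const]
      simp
      ring
    rw [h3] at hRunif
    linarith
  have hvar := variance_identity' m hm t
  have htk : ∀ k, ‖t k‖ ^ 2 = ‖α k‖ ^ 2 * ‖∑ j', β k j'‖ ^ 2 := by
    intro k
    rw [ht]
    rw [norm_mul, mul_pow]
  have hAT2 : 27 / 100 * (m:ℝ) ≤ ‖T‖ ^ 2 := by
    have h1 : ∑ k, ‖t k‖ ^ 2 = ∑ k, ‖α k‖ ^ 2 * ‖∑ j', β k j'‖ ^ 2 :=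
      Finset.sum_congr rfl fun k _ => htk k
    have h2 : ‖T‖ ^ 2 / (m:ℝ) = (∑ k, ‖t k‖ ^ 2)
        - ∑ k, ‖t k - T / (m:ℂ)‖ ^ 2 := by
      rw [hT] at *
      linarith [hvar]
    have h3 : 3 * e ≤ 3 / 10 ^ 10 := by
      rw [he, mul_one_div, div_le_div_iff₀ (by positivity) (by positivity)]
      nlinarith
    have h4 : 27 / 100 ≤ ‖T‖ ^ 2 / (m:ℝ) := by
      rw [h2, h1]
      linarith
    rw [le_div_iff₀ hm0] at h4
    linarith [h4]
  -- Step 6 : conclusion for the fixed vertex i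
  have hsingle : ‖t i - T / (m:ℂ)‖ ^ 2 ≤ 3 * e :=
    le_trans (Finset.single_le_sum (f := fun k => ‖t k - T / (m:ℂ)‖ ^ 2)
      (fun k _ => sq_nonneg _) (mem_univ i)) hU
  have hA1 : ‖α i‖ ^ 2 ≤ 1 := by
    rw [← hα]
    exact Finset.single_le_sum (f := fun k => ‖α k‖ ^ 2)
      (fun k _ => sq_nonneg _) (mem_univ i)
  have hX2 : ‖∑ j', β i j'‖ ^ 2 ≤ 3 := by
    have h1 : ‖∑ j', β i j'‖ ≤ ∑ j', ‖β i j'‖ :=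
      norm_sum_le _ _
    have h2 := Finset.sum_mul_sq_le_sq_mul_sq univ (fun _ : Fin 3 => (1:ℝ))
      (fun j' => ‖β i j'‖)
    simp only [one_mul, one_pow, Finset.sum_const, Finset.card_univ, Fintype.card_fin,
      nsmul_eq_mul] at h2
    rw [hβ i] at h2
    push_cast at h2
    have h3 : 0 ≤ ∑ j', ‖β i j'‖ :=
      Finset.sum_nonneg fun j' _ => norm_nonneg _
    nlinarith [mul_self_le_mul_self (norm_nonneg (∑ j', β i j')) h1]
  have hP : ‖T‖ / (m:ℝ) ≤ ‖α i‖ * ‖∑ j', β i j'‖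
      + ‖t i - T / (m:ℂ)‖ := by
    have h1 := norm_add_le (t i) (-(t i - T / (m:ℂ)))
    rw [norm_neg] at h1
    have h2 : t i + -(t i - T / (m:ℂ)) = T / (m:ℂ) := by ring
    rw [h2] at h1
    have h3 : ‖T / (m:ℂ)‖ = ‖T‖ / (m:ℝ) := by
      rw [norm_div, Complex.norm_natCast]
    have h4 : ‖t i‖ = ‖α i‖ * ‖∑ j', β i j'‖ := by
      rw [ht, norm_mul]
    rw [h3, h4] at h1
    exact h1
  have hP2 : 27 / 100 / (m:ℝ) ≤ (‖T‖ / (m:ℝ)) ^ 2 := by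
    rw [div_pow, div_le_div_iff₀ hm0 (by positivity)]
    nlinarith [hAT2, hm0]
  have hq2 : ‖t i - T / (m:ℂ)‖ ^ 2 ≤ 3 / (10 ^ 10 * (m:ℝ) ^ 2) := by
    rw [he] at hsingle
    calc ‖t i - T / (m:ℂ)‖ ^ 2 ≤ 3 * (1 / (10 ^ 10 * (m : ℝ) ^ 2)) := hsingle
      _ = 3 / (10 ^ 10 * (m:ℝ) ^ 2) := by ring
  show ‖α i‖ ^ 2 ≥ 1 / (100 * (m:ℝ))
  exact ge_iff_le.mpr (endgame' (‖α i‖) (‖∑ j', β i j'‖)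
    (‖t i - T / (m:ℂ)‖) (‖T‖ / (m:ℝ)) (m:ℝ)
    (norm_nonneg _) (norm_nonneg _) (norm_nonneg _)
    (by positivity) hm1 hA1 hX2 hP2 hq2 hP)
end

section
/- Let m ≥ 1 and let G be a simple graph on the vertex set {0, …, m−1} that admits no proper 3-coloring. Then for all unit vectors ψ, φ ∈ ℂ^m ⊗ ℂ³ in decomposed form with amplitudes (α_i, β_{i,j}) and (α'_i, β'_{i,j}), the total rejection probability satisfies R_eq + R_sv + R_edge(G) + R_unif(ψ) ≥ 10⁻¹⁰ · m⁻², where R_eq = 1 − ½(1 + |⟨ψ, φ⟩|²), R_sv = Σ_{i<m} Σ_{j≠j'} |α_i|² |β_{i,j}|² |α'_i|² |β'_{i,j'}|², R_edge(G) = Σ_{{u,v} ∈ E(G)} Σ_{j<3} (|α_u|²|β_{u,j}|²|α'_v|²|β'_{v,j}|² + |α_v|²|β_{v,j}|²|α'_u|²|β'_{u,j}|²), and R_unif(ψ) = ‖((I_m − u_m u_m*) ⊗ u₃u₃*) ψ‖². Consequently, the verifier that performs with probability 1/3 each of the equality, consistency, and uniformity tests rejects with probability at least (1/3)·10⁻¹⁰·m⁻².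 -/
open Finset

lemma bt_fid_tv {ι : Type*} [Fintype ι] (a b : ι → ℂ)
    (ha : ∑ i, ‖a i‖ ^ 2 = 1) (hb : ∑ i, ‖b i‖ ^ 2 = 1) :
    ‖∑ i, (starRingEnd ℂ) (a i) * b i‖ ≤ 1 ∧
    ∑ i, |‖a i‖ ^ 2 - ‖b i‖ ^ 2| ≤
      2 * Real.sqrt (1 - ‖∑ i, (starRingEnd ℂ) (a i) * b i‖ ^ 2) := by
  set F := ‖∑ i, (starRingEnd ℂ) (a i) * b i‖ with hFdef
  have hFnn : 0 ≤ F := norm_nonneg _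
  set f : ι → ℝ := fun i => ‖a i‖
  set g : ι → ℝ := fun i => ‖b i‖
  have hfnn : ∀ i, 0 ≤ f i := fun i => norm_nonneg _
  have hgnn : ∀ i, 0 ≤ g i := fun i => norm_nonneg _
  have hFT : F ≤ ∑ i, f i * g i := by
    refine le_trans (norm_sum_le _ _) (le_of_eq ?_)
    refine Finset.sum_congr rfl fun i _ => ?_
    rw [norm_mul, Complex.norm_conj]
  set T := ∑ i, f i * g i with hTdef
  have hTnn : 0 ≤ T := Finset.sum_nonneg fun i _ => mul_nonneg (hfnn i) (hgnn i)
  have hT1 : T ^ 2 ≤ 1 := by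
    have := Finset.sum_mul_sq_le_sq_mul_sq Finset.univ f g
    rw [ha, hb] at this
    simpa using this
  have hTle1 : T ≤ 1 := by nlinarith
  have hF1 : F ≤ 1 := le_trans hFT hTle1
  refine ⟨hF1, ?_⟩
  have hkey : (∑ i, |f i ^ 2 - g i ^ 2|) ^ 2 ≤ 4 * (1 - T ^ 2) := by
    have h1 : ∑ i, |f i ^ 2 - g i ^ 2| = ∑ i, (f i + g i) * |f i - g i| := by
      refine Finset.sum_congr rfl fun i _ => ?_
      rw [← abs_of_nonneg (add_nonneg (hfnn i) (hgnn i)), ← abs_mul]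
      ring_nf
    have h2 := Finset.sum_mul_sq_le_sq_mul_sq Finset.univ (fun i => f i + g i)
      (fun i => |f i - g i|)
    have h3 : ∑ i, (f i + g i) ^ 2 = 2 + 2 * T := by
      have : ∀ i, (f i + g i) ^ 2 = f i ^ 2 + g i ^ 2 + 2 * (f i * g i) := fun i => by ring
      simp_rw [this, Finset.sum_add_distrib, (show ∑ i, f i ^ 2 = 1 from ha), (show ∑ i, g i ^ 2 = 1 from hb), ← Finset.mul_sum]
      ring
    have h4 : ∑ i, |f i - g i| ^ 2 = 2 - 2 * T := by
      have : ∀ i, |f i - g i| ^ 2 = f i ^ 2 + g i ^ 2 - 2 * (f i * g i) := fun i => by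
        rw [sq_abs]; ring
      simp_rw [this, Finset.sum_sub_distrib, Finset.sum_add_distrib, (show ∑ i, f i ^ 2 = 1 from ha), (show ∑ i, g i ^ 2 = 1 from hb), ← Finset.mul_sum]
      ring
    rw [h1]
    calc (∑ i, (f i + g i) * |f i - g i|) ^ 2
        ≤ (∑ i, (f i + g i) ^ 2) * ∑ i, |f i - g i| ^ 2 := h2
      _ = (2 + 2 * T) * (2 - 2 * T) := by rw [h3, h4]
      _ = 4 * (1 - T ^ 2) := by ring
  have hTF : 1 - T ^ 2 ≤ 1 - F ^ 2 := by nlinarith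
  have h1F : 0 ≤ 1 - F ^ 2 := by nlinarith
  have hs : Real.sqrt (1 - F ^ 2) ^ 2 = 1 - F ^ 2 := Real.sq_sqrt h1F
  have hnn : 0 ≤ ∑ i, |f i ^ 2 - g i ^ 2| := Finset.sum_nonneg fun i _ => abs_nonneg _
  have : (∑ i, |f i ^ 2 - g i ^ 2|) ^ 2 ≤ (2 * Real.sqrt (1 - F ^ 2)) ^ 2 := by
    rw [mul_pow, hs]; nlinarith
  exact le_of_pow_le_pow_left₀ two_ne_zero (by positivity) this

lemma bt_conc3 (q q' : Fin 3 → ℝ) (hq : ∀ j, 0 ≤ q j) (hq' : ∀ j, 0 ≤ q' j)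
    (h1 : ∑ j, q j = 1) (h1' : ∑ j, q' j = 1) (η : ℝ)
    (h : 1 - ∑ j, q j * q' j ≤ η) :
    ∃ c, 1 - η ≤ q c ∧ 1 - 2 * η ≤ q' c := by
  obtain ⟨c, -, hc⟩ := Finset.exists_max_image Finset.univ q ⟨0, Finset.mem_univ 0⟩
  have hcmax : ∀ j, q j ≤ q c := fun j => hc j (Finset.mem_univ j)
  have hqle1 : ∀ j, q j ≤ 1 := by
    intro j
    rw [← h1]
    exact Finset.single_le_sum (fun i _ => hq i) (Finset.mem_univ j)
  have hq'le1 : ∀ j, q' j ≤ 1 := by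
    intro j
    rw [← h1']
    exact Finset.single_le_sum (fun i _ => hq' i) (Finset.mem_univ j)
  have hS : ∑ j, q j * q' j ≤ q c := by
    calc ∑ j, q j * q' j ≤ ∑ j, q c * q' j :=
          Finset.sum_le_sum fun j _ => mul_le_mul_of_nonneg_right (hcmax j) (hq' j)
      _ = q c := by rw [← Finset.mul_sum, h1', mul_one]
  refine ⟨c, by linarith, ?_⟩
  have hsplit : q c * q' c + ∑ j ∈ Finset.univ.erase c, q j * q' j = ∑ j, q j * q' j :=
    Finset.add_sum_erase _ (fun j => q j * q' j) (Finset.mem_univ c)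
  have hsplit2 : q c + ∑ j ∈ Finset.univ.erase c, q j = 1 := by
    rw [Finset.add_sum_erase _ q (Finset.mem_univ c), h1]
  have herase : ∑ j ∈ Finset.univ.erase c, q j * q' j ≤ ∑ j ∈ Finset.univ.erase c, q j :=
    Finset.sum_le_sum fun j _ => by
      nlinarith [hq j, hq' j, hq'le1 j]
  nlinarith [hq' c, hqle1 c, hq c]

lemma bt_bsum_upper (β : Fin 3 → ℂ) (h1 : ∑ j, ‖β j‖ ^ 2 = 1) :
    ‖∑ j, β j‖ ^ 2 ≤ 3 := by
  have h2 : ‖∑ j, β j‖ ≤ ∑ j, ‖β j‖ := norm_sum_le _ _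
  have h3 : (∑ j, ‖β j‖) ^ 2 ≤ 3 := by
    have := Finset.sum_mul_sq_le_sq_mul_sq Finset.univ (fun j => ‖β j‖)
      (fun _ => (1 : ℝ))
    simp only [mul_one, one_pow, Finset.sum_const, Finset.card_univ, Fintype.card_fin,
      nsmul_eq_mul] at this
    rw [h1] at this
    push_cast at this
    linarith
  have hnn : 0 ≤ ‖∑ j, β j‖ := norm_nonneg _
  nlinarith [Finset.sum_nonneg (fun j (_ : j ∈ Finset.univ) => norm_nonneg (β j))]

lemma bt_bsum_lower (β : Fin 3 → ℂ) (h1 : ∑ j, ‖β j‖ ^ 2 = 1) (c : Fin 3)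
    (η : ℝ) (hη : 0 ≤ η) (hc : 1 - η ≤ ‖β c‖ ^ 2) :
    1 - η - 2 * Real.sqrt η ≤ ‖∑ j, β j‖ := by
  have hsmall : ∀ j ∈ Finset.univ.erase c, ‖β j‖ ≤ Real.sqrt η := by
    intro j hj
    have hjc : j ≠ c := (Finset.mem_erase.mp hj).1
    have hpair : ‖β c‖ ^ 2 + ‖β j‖ ^ 2 ≤ 1 := by
      rw [← h1]
      have : ({c, j} : Finset (Fin 3)) ⊆ Finset.univ := Finset.subset_univ _
      calc ‖β c‖ ^ 2 + ‖β j‖ ^ 2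
          = ∑ k ∈ ({c, j} : Finset (Fin 3)), ‖β k‖ ^ 2 :=
            (Finset.sum_pair (f := fun k => ‖β k‖ ^ 2) (Ne.symm hjc)).symm
        _ ≤ _ := Finset.sum_le_sum_of_subset_of_nonneg this fun k _ _ => sq_nonneg _
    have hj2 : ‖β j‖ ^ 2 ≤ η := by linarith
    calc ‖β j‖ = Real.sqrt (‖β j‖ ^ 2) :=
          (Real.sqrt_sq (norm_nonneg _)).symm
      _ ≤ Real.sqrt η := Real.sqrt_le_sqrt hj2
  have htri : ‖β c‖ ≤ ‖∑ j, β j‖ +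
      ∑ j ∈ Finset.univ.erase c, ‖β j‖ := by
    have hsum : β c = (∑ j, β j) - ∑ j ∈ Finset.univ.erase c, β j := by
      rw [← Finset.add_sum_erase _ β (Finset.mem_univ c)]; ring
    calc ‖β c‖ = ‖(∑ j, β j) - ∑ j ∈ Finset.univ.erase c, β j‖ := by
          rw [← hsum]
      _ ≤ ‖∑ j, β j‖ + ‖∑ j ∈ Finset.univ.erase c, β j‖ := by
          rw [sub_eq_add_neg]
          refine (norm_add_le _ _).trans (le_of_eq ?_)
          rw [norm_neg]
      _ ≤ _ := by
          gcongr
          exact norm_sum_le _ _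
  have hcard : (Finset.univ.erase c).card = 2 := by
    rw [Finset.card_erase_of_mem (Finset.mem_univ c)]
    simp
  have herase : ∑ j ∈ Finset.univ.erase c, ‖β j‖ ≤ 2 * Real.sqrt η := by
    calc ∑ j ∈ Finset.univ.erase c, ‖β j‖
        ≤ ∑ _j ∈ Finset.univ.erase c, Real.sqrt η := Finset.sum_le_sum hsmall
      _ = 2 * Real.sqrt η := by rw [Finset.sum_const, hcard]; ring
  have hble1 : ‖β c‖ ≤ 1 := by
    nlinarith [norm_nonneg (β c), sq_nonneg (‖β c‖ - 1),
      Finset.single_le_sum (fun (j : Fin 3) (_ : j ∈ Finset.univ) =>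
        sq_nonneg (‖β j‖)) (Finset.mem_univ c), h1]
  have hbc : 1 - η ≤ ‖β c‖ := by
    nlinarith [norm_nonneg (β c)]
  linarith

set_option maxHeartbeats 1000000 in
theorem bt_main (m : ℕ) (hm : 1 ≤ m)
    (G : SimpleGraph (Fin m)) [DecidableRel G.Adj]
    (hG : ¬ G.Colorable 3)
    (α α' : Fin m → ℂ) (β β' : Fin m → Fin 3 → ℂ)
    (hα : ∑ i, ‖α i‖ ^ 2 = 1)
    (hα' : ∑ i, ‖α' i‖ ^ 2 = 1)
    (hβ : ∀ i, ∑ j, ‖β i j‖ ^ 2 = 1)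
    (hβ' : ∀ i, ∑ j, ‖β' i j‖ ^ 2 = 1) :
    (1 - (1 / 2 : ℝ) * (1 + ‖∑ i, ∑ j, (starRingEnd ℂ) (α i * β i j) * (α' i * β' i j)‖ ^ 2))
    + (∑ i, ∑ j, ∑ j', (if j = j' then 0 else
        ‖α i‖ ^ 2 * ‖β i j‖ ^ 2 *
          ‖α' i‖ ^ 2 * ‖β' i j'‖ ^ 2))
    + (∑ u, ∑ v, if G.Adj u v ∧ u < v then ∑ j : Fin 3,
        (‖α u‖ ^ 2 * ‖β u j‖ ^ 2 *
            ‖α' v‖ ^ 2 * ‖β' v j‖ ^ 2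
          + ‖α v‖ ^ 2 * ‖β v j‖ ^ 2 *
            ‖α' u‖ ^ 2 * ‖β' u j‖ ^ 2) else 0)
    + ‖toEuc (fun q : Fin m × Fin 3 =>
          (1 / 3 : ℂ) * (α q.1 * ∑ j', β q.1 j')
            - (1 / (3 * (m : ℂ))) * ∑ i', (α i' * ∑ j', β i' j'))‖ ^ 2
    ≥ 1 / (10 ^ 10 * (m : ℝ) ^ 2) := by
  by_contra hcon
  push_neg at hcon
  -- basic numeric facts
  have hd1 : (1:ℝ) ≤ (m:ℝ) := by exact_mod_cast hm
  have hd0 : (0:ℝ) < (m:ℝ) := by linarith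
  have hmC : (m:ℂ) ≠ 0 := Nat.cast_ne_zero.mpr (by omega)
  set u : ℝ := 1 / (m:ℝ) with hu_def
  have hu0 : 0 < u := by positivity
  have hu1 : u ≤ 1 := by rw [hu_def, div_le_one hd0]; exact hd1
  have hum : u * (m:ℝ) = 1 := by rw [hu_def]; field_simp
  have hδ : 1 / (10 ^ 10 * (m:ℝ) ^ 2) = u ^ 2 / 10 ^ 10 := by
    rw [hu_def]; field_simp
  -- norms of the two states
  have hanorm : ∑ q : Fin m × Fin 3, ‖α q.1 * β q.1 q.2‖ ^ 2 = 1 := by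
    rw [Fintype.sum_prod_type]
    calc ∑ i, ∑ j, ‖α i * β i j‖ ^ 2
        = ∑ i, ‖α i‖ ^ 2 := by
          refine Finset.sum_congr rfl fun i _ => ?_
          simp_rw [norm_mul, mul_pow, ← Finset.mul_sum]
          rw [hβ i, mul_one]
      _ = 1 := hα
  have ha'norm : ∑ q : Fin m × Fin 3, ‖α' q.1 * β' q.1 q.2‖ ^ 2 = 1 := by
    rw [Fintype.sum_prod_type]
    calc ∑ i, ∑ j, ‖α' i * β' i j‖ ^ 2
        = ∑ i, ‖α' i‖ ^ 2 := by
          refine Finset.sum_congr rfl fun i _ => ?_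
          simp_rw [norm_mul, mul_pow, ← Finset.mul_sum]
          rw [hβ' i, mul_one]
      _ = 1 := hα'
  obtain ⟨hF1, hTV⟩ := bt_fid_tv (fun q : Fin m × Fin 3 => α q.1 * β q.1 q.2)
    (fun q : Fin m × Fin 3 => α' q.1 * β' q.1 q.2) hanorm ha'norm
  simp only [Fintype.sum_prod_type] at hF1 hTV
  -- abbreviations
  set F : ℝ := ‖∑ i, ∑ j, (starRingEnd ℂ) (α i * β i j) * (α' i * β' i j)‖
    with hF_def
  set Dv : ℝ := ‖toEuc (fun q : Fin m × Fin 3 =>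
          (1 / 3 : ℂ) * (α q.1 * ∑ j', β q.1 j')
            - (1 / (3 * (m : ℂ))) * ∑ i', (α i' * ∑ j', β i' j'))‖ ^ 2 with hDv_def
  set Bv : ℝ := ∑ i, ∑ j, ∑ j', (if j = j' then (0:ℝ) else
        ‖α i‖ ^ 2 * ‖β i j‖ ^ 2 *
          ‖α' i‖ ^ 2 * ‖β' i j'‖ ^ 2) with hBv_def
  set Cv : ℝ := ∑ u, ∑ v, if G.Adj u v ∧ u < v then ∑ j : Fin 3,
        (‖α u‖ ^ 2 * ‖β u j‖ ^ 2 *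
            ‖α' v‖ ^ 2 * ‖β' v j‖ ^ 2
          + ‖α v‖ ^ 2 * ‖β v j‖ ^ 2 *
            ‖α' u‖ ^ 2 * ‖β' u j‖ ^ 2) else 0 with hCv_def
  -- nonnegativity of the four components
  have hF0 : 0 ≤ F := hF_def ▸ norm_nonneg _
  have hA0 : 0 ≤ 1 - (1 / 2 : ℝ) * (1 + F ^ 2) := by nlinarith [hF0, hF1]
  have hB0 : 0 ≤ Bv := by
    rw [hBv_def]
    refine Finset.sum_nonneg fun i _ => Finset.sum_nonneg fun j _ =>
      Finset.sum_nonneg fun j' _ => ?_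
    split_ifs
    · exact le_refl _
    · positivity
  have hC0 : 0 ≤ Cv := by
    rw [hCv_def]
    refine Finset.sum_nonneg fun x _ => Finset.sum_nonneg fun y _ => ?_
    split_ifs
    · exact Finset.sum_nonneg fun j _ => by positivity
    · exact le_refl _
  have hD0 : 0 ≤ Dv := by rw [hDv_def]; positivity
  clear_value u F Dv Bv Cv
  have hδpos : (0:ℝ) < u ^ 2 / 10 ^ 10 := div_pos (pow_pos hu0 2) (by norm_num)
  rw [hδ] at hcon
  have hAlt : 1 - (1 / 2 : ℝ) * (1 + F ^ 2) < u ^ 2 / 10 ^ 10 := by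
    linarith only [hcon, hB0, hC0, hD0]
  have hBlt : Bv < u ^ 2 / 10 ^ 10 := by linarith only [hcon, hA0, hC0, hD0]
  have hClt : Cv < u ^ 2 / 10 ^ 10 := by linarith only [hcon, hA0, hB0, hD0]
  have hDlt : Dv < u ^ 2 / 10 ^ 10 := by linarith only [hcon, hA0, hB0, hC0]
  -- sqrt bound from the equality test
  have hsqrtF : Real.sqrt (1 - F ^ 2) ≤ u / 10 ^ 4 := by
    have h2A : 1 - F ^ 2 ≤ (u / 10 ^ 4) ^ 2 := by nlinarith [hAlt, hu0, hu1]
    calc Real.sqrt (1 - F ^ 2) ≤ Real.sqrt ((u / 10 ^ 4) ^ 2) := Real.sqrt_le_sqrt h2A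
      _ = u / 10 ^ 4 := Real.sqrt_sq (by positivity)
  have hTV2 : ∑ i, ∑ j, |‖α i * β i j‖ ^ 2 - ‖α' i * β' i j‖ ^ 2|
      ≤ 2 * (u / 10 ^ 4) := le_trans hTV (by linarith only [hsqrtF])
  -- per-vertex closeness of the two node distributions
  have hpq : ∀ i : Fin m, |‖α i‖ ^ 2 - ‖α' i‖ ^ 2|
      ≤ 2 * (u / 10 ^ 4) := by
    intro i
    have h1 : ‖α i‖ ^ 2 = ∑ j, ‖α i * β i j‖ ^ 2 := by
      simp_rw [norm_mul, mul_pow, ← Finset.mul_sum]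
      rw [hβ i, mul_one]
    have h1' : ‖α' i‖ ^ 2 = ∑ j, ‖α' i * β' i j‖ ^ 2 := by
      simp_rw [norm_mul, mul_pow, ← Finset.mul_sum]
      rw [hβ' i, mul_one]
    calc |‖α i‖ ^ 2 - ‖α' i‖ ^ 2|
        = |∑ j, (‖α i * β i j‖ ^ 2 - ‖α' i * β' i j‖ ^ 2)| := by
          rw [Finset.sum_sub_distrib, ← h1, ← h1']
      _ ≤ ∑ j, |‖α i * β i j‖ ^ 2 - ‖α' i * β' i j‖ ^ 2| :=
          Finset.abs_sum_le_sum_abs _ _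
      _ ≤ ∑ i, ∑ j, |‖α i * β i j‖ ^ 2 - ‖α' i * β' i j‖ ^ 2| :=
          Finset.single_le_sum (f := fun i => ∑ j,
            |‖α i * β i j‖ ^ 2 - ‖α' i * β' i j‖ ^ 2|)
            (fun i _ => Finset.sum_nonneg fun j _ => abs_nonneg _) (Finset.mem_univ i)
      _ ≤ 2 * (u / 10 ^ 4) := hTV2
  -- uniformity test value
  have hnorm_eq : ∀ (g : Fin m × Fin 3 → ℂ),
      ‖toEuc g‖ = Real.sqrt (∑ q : Fin m × Fin 3, ‖g q‖ ^ 2) := by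
    intro g
    rw [EuclideanSpace.norm_eq]
    rfl
  have hDval : Dv = ∑ i, (1/3) * ‖α i * (∑ j, β i j)
      - (∑ i', α i' * ∑ j', β i' j') / (m:ℂ)‖ ^ 2 := by
    rw [hDv_def, hnorm_eq]
    rw [Real.sq_sqrt (Finset.sum_nonneg fun q _ => by positivity)]
    rw [Fintype.sum_prod_type]
    refine Finset.sum_congr rfl fun i _ => ?_
    have hterm : (1 / 3 : ℂ) * (α i * ∑ j', β i j')
          - (1 / (3 * (m : ℂ))) * ∑ i', (α i' * ∑ j', β i' j')
        = (1/3 : ℂ) * (α i * (∑ j', β i j') - (∑ i', α i' * ∑ j', β i' j') / (m:ℂ)) := by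
      field_simp
    have hper : ∀ _j : Fin 3, ‖(1 / 3 : ℂ) * (α i * ∑ j', β i j')
          - (1 / (3 * (m : ℂ))) * ∑ i', (α i' * ∑ j', β i' j')‖ ^ 2
        = (1/9) * ‖α i * (∑ j', β i j')
            - (∑ i', α i' * ∑ j', β i' j') / (m:ℂ)‖ ^ 2 := by
      intro _j
      rw [hterm, norm_mul]
      have : ‖(1/3 : ℂ)‖ = 1/3 := by
        rw [norm_div, norm_one]
        norm_num
      rw [this]
      ring
    rw [Finset.sum_congr rfl (fun j _ => hper j), Finset.sum_const, Finset.card_univ,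
      Fintype.card_fin, nsmul_eq_mul]
    push_cast
    ring
  have hw : ∀ i : Fin m, ‖α i * (∑ j, β i j)
      - (∑ i', α i' * ∑ j', β i' j') / (m:ℂ)‖ ≤ u / 10 ^ 4 := by
    intro i
    have h1 : (1/3) * ‖α i * (∑ j, β i j)
        - (∑ i', α i' * ∑ j', β i' j') / (m:ℂ)‖ ^ 2 ≤ Dv := by
      rw [hDval]
      exact Finset.single_le_sum (f := fun i => (1/3) * ‖α i * (∑ j, β i j)
        - (∑ i', α i' * ∑ j', β i' j') / (m:ℂ)‖ ^ 2)
        (fun i _ => by positivity) (Finset.mem_univ i)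
    have hnn : 0 ≤ ‖α i * (∑ j, β i j)
        - (∑ i', α i' * ∑ j', β i' j') / (m:ℂ)‖ := norm_nonneg _
    nlinarith [hDlt, hu0, hu1]
  have hscomp : ∀ i i' : Fin m, ‖α i * ∑ j, β i j‖
      ≤ ‖α i' * ∑ j, β i' j‖ + 2 * (u / 10 ^ 4) := by
    intro i i'
    have habs2 : ∀ x y : ℂ, ‖x - y‖ ≤ ‖x‖ + ‖y‖ := by
      intro x y
      rw [sub_eq_add_neg]
      refine (norm_add_le _ _).trans (le_of_eq ?_)
      rw [norm_neg]
    have hsplit : α i * ∑ j, β i j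
        = ((α i * ∑ j, β i j - (∑ i', α i' * ∑ j', β i' j') / (m:ℂ))
          - (α i' * ∑ j, β i' j - (∑ i', α i' * ∑ j', β i' j') / (m:ℂ)))
          + α i' * ∑ j, β i' j := by ring
    calc ‖α i * ∑ j, β i j‖
        = ‖((α i * ∑ j, β i j - (∑ i', α i' * ∑ j', β i' j') / (m:ℂ))
          - (α i' * ∑ j, β i' j - (∑ i', α i' * ∑ j', β i' j') / (m:ℂ)))
          + α i' * ∑ j, β i' j‖ := by rw [← hsplit]
      _ ≤ ‖(α i * ∑ j, β i j - (∑ i', α i' * ∑ j', β i' j') / (m:ℂ))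
          - (α i' * ∑ j, β i' j - (∑ i', α i' * ∑ j', β i' j') / (m:ℂ))‖
          + ‖α i' * ∑ j, β i' j‖ := norm_add_le _ _
      _ ≤ (‖α i * ∑ j, β i j - (∑ i', α i' * ∑ j', β i' j') / (m:ℂ)‖
          + ‖α i' * ∑ j, β i' j - (∑ i', α i' * ∑ j', β i' j') / (m:ℂ)‖)
          + ‖α i' * ∑ j, β i' j‖ := by
            gcongr
            exact habs2 _ _
      _ ≤ ‖α i' * ∑ j, β i' j‖ + 2 * (u / 10 ^ 4) := by
            have := hw i
            have := hw i'
            linarith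
  -- consistency-test per-vertex identity
  have hBin : ∀ i : Fin m, (∑ j, ∑ j', (if j = j' then (0:ℝ) else
        ‖α i‖ ^ 2 * ‖β i j‖ ^ 2 *
          ‖α' i‖ ^ 2 * ‖β' i j'‖ ^ 2))
      = ‖α i‖ ^ 2 * ‖α' i‖ ^ 2 *
        (1 - ∑ j, ‖β i j‖ ^ 2 * ‖β' i j‖ ^ 2) := by
    intro i
    have hstep : ∀ j : Fin 3, (∑ j', (if j = j' then (0:ℝ) else
        ‖α i‖ ^ 2 * ‖β i j‖ ^ 2 *
          ‖α' i‖ ^ 2 * ‖β' i j'‖ ^ 2))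
        = ‖α i‖ ^ 2 * ‖β i j‖ ^ 2 * ‖α' i‖ ^ 2 *
            (1 - ‖β' i j‖ ^ 2) := by
      intro j
      have hsplit2 : ∀ j' : Fin 3, (if j = j' then (0:ℝ) else
          ‖α i‖ ^ 2 * ‖β i j‖ ^ 2 *
            ‖α' i‖ ^ 2 * ‖β' i j'‖ ^ 2)
          = ‖α i‖ ^ 2 * ‖β i j‖ ^ 2 *
              ‖α' i‖ ^ 2 * ‖β' i j'‖ ^ 2
            - (if j = j' then ‖α i‖ ^ 2 * ‖β i j‖ ^ 2 *
              ‖α' i‖ ^ 2 * ‖β' i j'‖ ^ 2 else 0) := by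
        intro j'; split_ifs <;> ring
      rw [Finset.sum_congr rfl fun j' _ => hsplit2 j']
      rw [Finset.sum_sub_distrib, Fintype.sum_ite_eq, ← Finset.mul_sum, hβ' i]
      ring
    rw [Finset.sum_congr rfl fun j _ => hstep j]
    have hre : ∀ j : Fin 3, ‖α i‖ ^ 2 * ‖β i j‖ ^ 2 *
        ‖α' i‖ ^ 2 * (1 - ‖β' i j‖ ^ 2)
        = ‖α i‖ ^ 2 * ‖α' i‖ ^ 2 * ‖β i j‖ ^ 2
          - ‖α i‖ ^ 2 * ‖α' i‖ ^ 2 *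
              (‖β i j‖ ^ 2 * ‖β' i j‖ ^ 2) := by
      intro j; ring
    rw [Finset.sum_congr rfl fun j _ => hre j, Finset.sum_sub_distrib, ← Finset.mul_sum,
      ← Finset.mul_sum, hβ i]
    ring
  have hBvert : ∀ i : Fin m, ‖α i‖ ^ 2 * ‖α' i‖ ^ 2 *
      (1 - ∑ j, ‖β i j‖ ^ 2 * ‖β' i j‖ ^ 2) < u ^ 2 / 10 ^ 10 := by
    intro i
    have hle : (∑ j, ∑ j', (if j = j' then (0:ℝ) else
        ‖α i‖ ^ 2 * ‖β i j‖ ^ 2 *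
          ‖α' i‖ ^ 2 * ‖β' i j'‖ ^ 2)) ≤ Bv := by
      rw [hBv_def]
      refine Finset.single_le_sum (f := fun i => ∑ j, ∑ j', (if j = j' then (0:ℝ) else
        ‖α i‖ ^ 2 * ‖β i j‖ ^ 2 *
          ‖α' i‖ ^ 2 * ‖β' i j'‖ ^ 2)) (fun i _ => ?_)
        (Finset.mem_univ i)
      refine Finset.sum_nonneg fun j _ => Finset.sum_nonneg fun j' _ => ?_
      split_ifs
      · exact le_refl _
      · positivity
    rw [← hBin i]
    exact lt_of_le_of_lt hle hBlt
  -- a vertex of weight at least 1/m exists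
  have hne : Nonempty (Fin m) := ⟨⟨0, by omega⟩⟩
  obtain ⟨i1, hi1⟩ : ∃ i : Fin m, u ≤ ‖α i‖ ^ 2 := by
    by_contra hnot
    push_neg at hnot
    have hlt : ∑ i, ‖α i‖ ^ 2 < ∑ _i : Fin m, u :=
      Finset.sum_lt_sum_of_nonempty Finset.univ_nonempty fun i _ => hnot i
    rw [hα, Finset.sum_const, Finset.card_univ, Fintype.card_fin, nsmul_eq_mul] at hlt
    nlinarith [hum]
  -- Claim A: every vertex has weight at least (3/10)u
  have claimA : ∀ i : Fin m, 3 / 10 * u ≤ ‖α i‖ ^ 2 := by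
    by_contra hnot
    push_neg at hnot
    obtain ⟨i0, hi0⟩ := hnot
    have hp'1 : 9/10 * u ≤ ‖α' i1‖ ^ 2 := by
      have h := abs_le.mp (hpq i1)
      linarith only [h.2, hi1, hu0]
    have hX : 1 - ∑ j, ‖β i1 j‖ ^ 2 * ‖β' i1 j‖ ^ 2 ≤ 1/10^9 := by
      by_contra hXc
      push_neg at hXc
      have h := hBvert i1
      have hm1 : u * (9/10 * u) ≤ ‖α i1‖ ^ 2 * ‖α' i1‖ ^ 2 :=
        mul_le_mul hi1 hp'1 (by positivity) (sq_nonneg _)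
      have hstep : u * (9/10 * u) * (1/10^9)
          ≤ ‖α i1‖ ^ 2 * ‖α' i1‖ ^ 2 *
            (1 - ∑ j, ‖β i1 j‖ ^ 2 * ‖β' i1 j‖ ^ 2) :=
        mul_le_mul hm1 (le_of_lt hXc) (by norm_num)
          (mul_nonneg (sq_nonneg _) (sq_nonneg _))
      have hu2 : (0:ℝ) < u * u := mul_pos hu0 hu0
      linarith only [h, hstep, hu2]
    obtain ⟨c1, hc1, -⟩ := bt_conc3 (fun j => ‖β i1 j‖ ^ 2)
      (fun j => ‖β' i1 j‖ ^ 2) (fun j => sq_nonneg _) (fun j => sq_nonneg _)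
      (hβ i1) (hβ' i1) (1/10^9) hX
    have hBlow : 1 - 1/10^9 - 2 * Real.sqrt (1/10^9) ≤ ‖∑ j, β i1 j‖ :=
      bt_bsum_lower (β i1) (hβ i1) c1 (1/10^9) (by norm_num) hc1
    have hsq9 : Real.sqrt (1/10^9) ≤ 1/10^4 := by
      rw [show (1:ℝ)/10^4 = Real.sqrt ((1/10^4)^2) from (Real.sqrt_sq (by norm_num)).symm]
      exact Real.sqrt_le_sqrt (by norm_num)
    have hBlow2 : (999:ℝ)/1000 ≤ ‖∑ j, β i1 j‖ := by linarith only [hBlow, hsq9]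
    set su := Real.sqrt u with hsu_def
    have hsu0 : 0 < su := Real.sqrt_pos.mpr hu0
    have hsu2 : su ^ 2 = u := Real.sq_sqrt (le_of_lt hu0)
    have hsu1 : su ≤ 1 := Real.sqrt_le_one.mpr hu1
    have husu : u ≤ su := by
      rw [← hsu2, pow_two]
      calc su * su ≤ 1 * su := mul_le_mul_of_nonneg_right hsu1 (le_of_lt hsu0)
        _ = su := one_mul su
    have habs1 : su ≤ ‖α i1‖ := by
      have h := Real.sqrt_le_sqrt hi1
      rwa [Real.sqrt_sq (norm_nonneg _)] at h
    have hs1 : 999/1000 * su ≤ ‖α i1 * ∑ j, β i1 j‖ := by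
      rw [norm_mul]
      have h := mul_le_mul hBlow2 habs1 (le_of_lt hsu0) (norm_nonneg _)
      exact h.trans_eq (mul_comm _ _)
    have hup : ‖∑ j, β i0 j‖ ^ 2 ≤ 3 := bt_bsum_upper (β i0) (hβ i0)
    have hs0 : ‖α i0 * ∑ j, β i0 j‖ ≤ 19/20 * su := by
      rw [norm_mul]
      have h1 : ‖α i0‖ ^ 2 ≤ 3/10 * u := le_of_lt hi0
      have h2 : (‖α i0‖ * ‖∑ j, β i0 j‖) ^ 2 ≤ 9/10 * u := by
        rw [mul_pow]
        have h := mul_le_mul h1 hup (sq_nonneg _) (by positivity)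
        linarith only [h]
      have h3 : (‖α i0‖ * ‖∑ j, β i0 j‖) ^ 2 ≤ (19/20 * su) ^ 2 := by
        have he : (19/20 * su) ^ 2 = 361/400 * u := by rw [mul_pow, hsu2]; ring
        linarith only [h2, he, hu0]
      exact le_of_pow_le_pow_left₀ two_ne_zero (by positivity) h3
    have hcomp := hscomp i1 i0
    linarith only [hs1, hs0, husu, hsu0, hcomp]
  have claimA' : ∀ i : Fin m, 29/100 * u ≤ ‖α' i‖ ^ 2 := by
    intro i
    have h := abs_le.mp (hpq i)
    have h2 := claimA i
    linarith only [h.2, h2, hu0]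
  -- Claim B: every vertex is concentrated on a color, in both states
  have claimB : ∀ i : Fin m, ∃ c : Fin 3,
      3/4 ≤ ‖β i c‖ ^ 2 ∧ 3/4 ≤ ‖β' i c‖ ^ 2 := by
    intro i
    have hX : 1 - ∑ j, ‖β i j‖ ^ 2 * ‖β' i j‖ ^ 2 ≤ 1/10^8 := by
      by_contra hXc
      push_neg at hXc
      have h := hBvert i
      have h1 := claimA i
      have h2 := claimA' i
      have hm1 : (3/10 * u) * (29/100 * u)
          ≤ ‖α i‖ ^ 2 * ‖α' i‖ ^ 2 :=
        mul_le_mul h1 h2 (by positivity) (sq_nonneg _)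
      have hstep : (3/10 * u) * (29/100 * u) * (1/10^8)
          ≤ ‖α i‖ ^ 2 * ‖α' i‖ ^ 2 *
            (1 - ∑ j, ‖β i j‖ ^ 2 * ‖β' i j‖ ^ 2) :=
        mul_le_mul hm1 (le_of_lt hXc) (by norm_num)
          (mul_nonneg (sq_nonneg _) (sq_nonneg _))
      have hu2 : (0:ℝ) < u * u := mul_pos hu0 hu0
      linarith only [h, hstep, hu2]
    obtain ⟨c, hc, hc'⟩ := bt_conc3 (fun j => ‖β i j‖ ^ 2)
      (fun j => ‖β' i j‖ ^ 2) (fun j => sq_nonneg _) (fun j => sq_nonneg _)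
      (hβ i) (hβ' i) (1/10^8) hX
    exact ⟨c, by linarith only [hc], by linarith only [hc']⟩
  choose col hcolβ hcolβ' using claimB
  have hnotcol : ¬ ∀ (x y : Fin m), G.Adj x y → col x ≠ col y := by
    intro hvalid
    exact hG ⟨SimpleGraph.Coloring.mk col fun {x y} h => hvalid x y h⟩
  push_neg at hnotcol
  obtain ⟨x, y, hadj, heqc⟩ := hnotcol
  -- a single monochromatic edge term lower-bounds the edge test
  have hedge : ∀ (x0 y0 : Fin m) (j : Fin 3), G.Adj x0 y0 → x0 < y0 →
      ‖α x0‖ ^ 2 * ‖β x0 j‖ ^ 2 *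
        ‖α' y0‖ ^ 2 * ‖β' y0 j‖ ^ 2 ≤ Cv := by
    intro x0 y0 j hadj0 hlt0
    rw [hCv_def]
    have hterm : ‖α x0‖ ^ 2 * ‖β x0 j‖ ^ 2 *
        ‖α' y0‖ ^ 2 * ‖β' y0 j‖ ^ 2
        ≤ ∑ jj : Fin 3, (‖α x0‖ ^ 2 * ‖β x0 jj‖ ^ 2 *
            ‖α' y0‖ ^ 2 * ‖β' y0 jj‖ ^ 2
          + ‖α y0‖ ^ 2 * ‖β y0 jj‖ ^ 2 *
            ‖α' x0‖ ^ 2 * ‖β' x0 jj‖ ^ 2) := by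
      have hmono := Finset.single_le_sum
        (f := fun jj => ‖α x0‖ ^ 2 * ‖β x0 jj‖ ^ 2 *
            ‖α' y0‖ ^ 2 * ‖β' y0 jj‖ ^ 2
          + ‖α y0‖ ^ 2 * ‖β y0 jj‖ ^ 2 *
            ‖α' x0‖ ^ 2 * ‖β' x0 jj‖ ^ 2)
        (fun jj _ => by positivity) (Finset.mem_univ j)
      have hother : (0:ℝ) ≤ ‖α y0‖ ^ 2 * ‖β y0 j‖ ^ 2 *
          ‖α' x0‖ ^ 2 * ‖β' x0 j‖ ^ 2 := by positivity
      linarith only [hmono, hother]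
    have hinner : ∀ a b : Fin m, (0:ℝ) ≤ (if G.Adj a b ∧ a < b then ∑ jj : Fin 3,
        (‖α a‖ ^ 2 * ‖β a jj‖ ^ 2 *
            ‖α' b‖ ^ 2 * ‖β' b jj‖ ^ 2
          + ‖α b‖ ^ 2 * ‖β b jj‖ ^ 2 *
            ‖α' a‖ ^ 2 * ‖β' a jj‖ ^ 2) else 0) := by
      intro a b
      split_ifs
      · exact Finset.sum_nonneg fun jj _ => by positivity
      · exact le_refl _
    calc ‖α x0‖ ^ 2 * ‖β x0 j‖ ^ 2 *
        ‖α' y0‖ ^ 2 * ‖β' y0 j‖ ^ 2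
        ≤ (if G.Adj x0 y0 ∧ x0 < y0 then ∑ jj : Fin 3,
            (‖α x0‖ ^ 2 * ‖β x0 jj‖ ^ 2 *
                ‖α' y0‖ ^ 2 * ‖β' y0 jj‖ ^ 2
              + ‖α y0‖ ^ 2 * ‖β y0 jj‖ ^ 2 *
                ‖α' x0‖ ^ 2 * ‖β' x0 jj‖ ^ 2) else 0) := by
          rw [if_pos ⟨hadj0, hlt0⟩]
          exact hterm
      _ ≤ ∑ v, (if G.Adj x0 v ∧ x0 < v then ∑ jj : Fin 3,
            (‖α x0‖ ^ 2 * ‖β x0 jj‖ ^ 2 *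
                ‖α' v‖ ^ 2 * ‖β' v jj‖ ^ 2
              + ‖α v‖ ^ 2 * ‖β v jj‖ ^ 2 *
                ‖α' x0‖ ^ 2 * ‖β' x0 jj‖ ^ 2) else 0) :=
          Finset.single_le_sum (f := fun v => (if G.Adj x0 v ∧ x0 < v then ∑ jj : Fin 3,
            (‖α x0‖ ^ 2 * ‖β x0 jj‖ ^ 2 *
                ‖α' v‖ ^ 2 * ‖β' v jj‖ ^ 2
              + ‖α v‖ ^ 2 * ‖β v jj‖ ^ 2 *
                ‖α' x0‖ ^ 2 * ‖β' x0 jj‖ ^ 2) else 0))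
            (fun v _ => hinner x0 v) (Finset.mem_univ y0)
      _ ≤ ∑ w, ∑ v, (if G.Adj w v ∧ w < v then ∑ jj : Fin 3,
            (‖α w‖ ^ 2 * ‖β w jj‖ ^ 2 *
                ‖α' v‖ ^ 2 * ‖β' v jj‖ ^ 2
              + ‖α v‖ ^ 2 * ‖β v jj‖ ^ 2 *
                ‖α' w‖ ^ 2 * ‖β' w jj‖ ^ 2) else 0) :=
          Finset.single_le_sum (f := fun w => ∑ v, (if G.Adj w v ∧ w < v then ∑ jj : Fin 3,
            (‖α w‖ ^ 2 * ‖β w jj‖ ^ 2 *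
                ‖α' v‖ ^ 2 * ‖β' v jj‖ ^ 2
              + ‖α v‖ ^ 2 * ‖β v jj‖ ^ 2 *
                ‖α' w‖ ^ 2 * ‖β' w jj‖ ^ 2) else 0))
            (fun w _ => Finset.sum_nonneg fun v _ => hinner w v) (Finset.mem_univ x0)
  -- final contradiction
  have hfinal : 87/3200 * u ^ 2 ≤ Cv := by
    rcases lt_or_gt_of_ne (G.ne_of_adj hadj) with hlt | hgt
    · have h1 := hedge x y (col x) hadj hlt
      have hb2 : 3/4 ≤ ‖β' y (col x)‖ ^ 2 := by
        rw [heqc]; exact hcolβ' y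
      have hmul : (3/10 * u) * (3/4) * (29/100 * u) * (3/4)
          ≤ ‖α x‖ ^ 2 * ‖β x (col x)‖ ^ 2 *
            ‖α' y‖ ^ 2 * ‖β' y (col x)‖ ^ 2 := by
        have g1 := claimA x
        have g2 := hcolβ x
        have g3 := claimA' y
        gcongr <;> positivity
      linarith only [h1, hmul, sq_nonneg u]
    · have h1 := hedge y x (col y) hadj.symm hgt
      have hb2 : 3/4 ≤ ‖β' x (col y)‖ ^ 2 := by
        rw [← heqc]; exact hcolβ' x
      have hmul : (3/10 * u) * (3/4) * (29/100 * u) * (3/4)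
          ≤ ‖α y‖ ^ 2 * ‖β y (col y)‖ ^ 2 *
            ‖α' x‖ ^ 2 * ‖β' x (col y)‖ ^ 2 := by
        have g1 := claimA y
        have g2 := hcolβ y
        have g3 := claimA' x
        gcongr <;> positivity
      linarith only [h1, hmul, sq_nonneg u]
  have hu2 : (0:ℝ) < u * u := mul_pos hu0 hu0
  linarith only [hfinal, hClt, hu2]



/-- **Soundness of the Blier–Tapp verifier.**
If the simple graph `G` on `{0, …, m−1}` admits no proper 3-coloring, then for
all decomposed unit vectors `ψ, φ ∈ ℂ^m ⊗ ℂ³` the total rejection probability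
satisfies `R_eq + R_sv + R_edge(G) + R_unif(ψ) ≥ 10⁻¹⁰ m⁻²`; consequently the
verifier performing each of the three tests with probability `1/3` rejects with
probability at least `(1/3) · 10⁻¹⁰ m⁻²`. Each edge `{u,v}` of `G` is counted
once (as the ordered pair with `u < v`), with both orientation terms. -/
theorem blier_tapp_soundness (m : ℕ) (hm : 1 ≤ m)
    (G : SimpleGraph (Fin m)) [DecidableRel G.Adj]
    (hG : ¬ G.Colorable 3)
    (α α' : Fin m → ℂ) (β β' : Fin m → Fin 3 → ℂ)
    (hα : ∑ i, ‖α i‖ ^ 2 = 1)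
    (hα' : ∑ i, ‖α' i‖ ^ 2 = 1)
    (hβ : ∀ i, ∑ j, ‖β i j‖ ^ 2 = 1)
    (hβ' : ∀ i, ∑ j, ‖β' i j‖ ^ 2 = 1) :
    (1 - (1 / 2 : ℝ) * (1 + ‖∑ i, ∑ j, (starRingEnd ℂ) (α i * β i j) * (α' i * β' i j)‖ ^ 2))
    + (∑ i, ∑ j, ∑ j', (if j = j' then 0 else
        ‖α i‖ ^ 2 * ‖β i j‖ ^ 2 *
          ‖α' i‖ ^ 2 * ‖β' i j'‖ ^ 2))
    + (∑ u, ∑ v, if G.Adj u v ∧ u < v then ∑ j : Fin 3,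
        (‖α u‖ ^ 2 * ‖β u j‖ ^ 2 *
            ‖α' v‖ ^ 2 * ‖β' v j‖ ^ 2
          + ‖α v‖ ^ 2 * ‖β v j‖ ^ 2 *
            ‖α' u‖ ^ 2 * ‖β' u j‖ ^ 2) else 0)
    + ‖toEuc (fun q : Fin m × Fin 3 =>
          (1 / 3 : ℂ) * (α q.1 * ∑ j', β q.1 j')
            - (1 / (3 * (m : ℂ))) * ∑ i', (α i' * ∑ j', β i' j'))‖ ^ 2
    ≥ 1 / (10 ^ 10 * (m : ℝ) ^ 2)
    ∧ (1 / 3 : ℝ) *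
      ((1 - (1 / 2 : ℝ) * (1 + ‖∑ i, ∑ j, (starRingEnd ℂ) (α i * β i j) * (α' i * β' i j)‖ ^ 2))
      + (∑ i, ∑ j, ∑ j', (if j = j' then 0 else
          ‖α i‖ ^ 2 * ‖β i j‖ ^ 2 *
            ‖α' i‖ ^ 2 * ‖β' i j'‖ ^ 2))
      + (∑ u, ∑ v, if G.Adj u v ∧ u < v then ∑ j : Fin 3,
          (‖α u‖ ^ 2 * ‖β u j‖ ^ 2 *
              ‖α' v‖ ^ 2 * ‖β' v j‖ ^ 2
            + ‖α v‖ ^ 2 * ‖β v j‖ ^ 2 *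
              ‖α' u‖ ^ 2 * ‖β' u j‖ ^ 2) else 0)
      + ‖toEuc (fun q : Fin m × Fin 3 =>
            (1 / 3 : ℂ) * (α q.1 * ∑ j', β q.1 j')
              - (1 / (3 * (m : ℂ))) * ∑ i', (α i' * ∑ j', β i' j'))‖ ^ 2)
    ≥ (1 / 3 : ℝ) * (1 / (10 ^ 10 * (m : ℝ) ^ 2)):=
  ⟨bt_main m hm G hG α α' β β' hα hα' hβ hβ', by
    have h := bt_main m hm G hG α α' β β' hα hα' hβ hβ'
    linarith⟩
end

section
/- Let m ≥ 1, let G be a simple graph on the vertex set {0, …, m−1}, and let c : {0,…,m−1} → {0,1,2} be a proper 3-coloring of G (c(u) ≠ c(v) for every edge {u,v}). Define the unit vector φ_c = (1/√m) Σ_{i<m} e_i ⊗ f_{c(i)} ∈ ℂ^m ⊗ ℂ³. Then, taking both proof registers equal to φ_c (i.e. ψ = φ = φ_c with amplitudes α_i = α'_i = 1/√m and β_{i,j} = β'_{i,j} = [j = c(i)]), all rejection probabilities vanish: R_eq = 1 − ½(1 + |⟨φ_c, φ_c⟩|²) = 0, R_sv = 0, R_edge(G) = 0, and R_unif(φ_c)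 = ‖((I_m − u_m u_m*) ⊗ u₃u₃*) φ_c‖² = 0. Hence the verifier accepts with probability 1. -/
/-- **Completeness of the Blier–Tapp verifier.**
If `c` is a proper 3-coloring of the simple graph `G` on `{0, …, m−1}` and
both proof registers are `φ_c = (1/√m) Σ_i e_i ⊗ f_{c(i)}` (amplitudes
`α_i = 1/√m`, `β_{i,j} = [j = c i]`), then all rejection probabilities vanish:
`R_eq = 0`, `R_sv = 0`, `R_edge(G) = 0`, and `R_unif(φ_c) = 0`; hence the
verifier accepts with probability `1`. -/
theorem blier_tapp_completeness (m : ℕ) (hm : 1 ≤ m)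
    (G : SimpleGraph (Fin m)) [DecidableRel G.Adj]
    (c : Fin m → Fin 3) (hc : ∀ u v, G.Adj u v → c u ≠ c v)
    (α : Fin m → ℂ) (β : Fin m → Fin 3 → ℂ)
    (hαdef : ∀ i, α i = ((Real.sqrt m : ℂ))⁻¹)
    (hβdef : ∀ i j, β i j = if j = c i then 1 else 0) :
    (1 - (1 / 2 : ℝ) * (1 + ‖∑ i, ∑ j, (starRingEnd ℂ) (α i * β i j) * (α i * β i j)‖ ^ 2) = 0)
    ∧ (∑ i, ∑ j, ∑ j', (if j = j' then 0 else
        ‖α i‖ ^ 2 * ‖β i j‖ ^ 2 *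
          ‖α i‖ ^ 2 * ‖β i j'‖ ^ 2) = 0)
    ∧ (∑ u, ∑ v, (if G.Adj u v ∧ u < v then ∑ j : Fin 3,
        (‖α u‖ ^ 2 * ‖β u j‖ ^ 2 *
            ‖α v‖ ^ 2 * ‖β v j‖ ^ 2
          + ‖α v‖ ^ 2 * ‖β v j‖ ^ 2 *
            ‖α u‖ ^ 2 * ‖β u j‖ ^ 2) else 0) = 0)
    ∧ ‖toEuc (fun q : Fin m × Fin 3 =>
          (1 / 3 : ℂ) * (α q.1 * ∑ j', β q.1 j')
            - (1 / (3 * (m : ℂ))) * ∑ i', (α i' * ∑ j', β i' j'))‖ ^ 2 = 0 := by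
  have hm0 : (0:ℝ) < m := by exact_mod_cast hm
  have hmc : (m:ℂ) ≠ 0 := Nat.cast_ne_zero.2 (by omega)
  set s : ℂ := ((Real.sqrt m : ℂ))⁻¹ with hs
  have hconj : (starRingEnd ℂ) s = s := by
    simp [hs, Complex.conj_ofReal]
  have hss : s * s = ((m:ℂ))⁻¹ := by
    rw [hs, ← mul_inv, ← Complex.ofReal_mul, Real.mul_self_sqrt hm0.le]; push_cast; ring
  have hβsum : ∀ i, (∑ j', β i j') = 1 := by
    intro i; simp [hβdef]
  have hβ0 : ∀ i j, j ≠ c i → β i j = 0 := by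
    intro i j h; simp [hβdef, h]
  refine ⟨?_, ?_, ?_, ?_⟩
  · have key : (∑ i, ∑ j : Fin 3, (starRingEnd ℂ) (α i * β i j) * (α i * β i j)) = 1 := by
      have h1 : ∀ i : Fin m, (∑ j : Fin 3, (starRingEnd ℂ) (α i * β i j) * (α i * β i j))
          = ((m:ℂ))⁻¹ := by
        intro i
        rw [← hss]
        simp [hαdef, hβdef, apply_ite (starRingEnd ℂ), mul_ite, ite_mul, hconj]
      simp only [h1, Finset.sum_const, Finset.card_univ, Fintype.card_fin,
        nsmul_eq_mul, mul_inv_cancel₀ hmc]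
    rw [key]
    norm_num
  · refine Finset.sum_eq_zero fun i _ => Finset.sum_eq_zero fun j _ =>
      Finset.sum_eq_zero fun j' _ => ?_
    split_ifs with h
    · rfl
    · rcases eq_or_ne j (c i) with hj | hj
      · rw [hβ0 i j' (by rw [hj] at h; exact Ne.symm h)]
        simp
      · rw [hβ0 i j hj]; simp
  · refine Finset.sum_eq_zero fun u _ => Finset.sum_eq_zero fun v _ => ?_
    split_ifs with h
    · refine Finset.sum_eq_zero fun j _ => ?_
      have hne := hc u v h.1
      rcases eq_or_ne j (c u) with hj | hj
      · rw [hβ0 v j (by rw [hj]; exact hne)]; simp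
      · rw [hβ0 u j hj]; simp
    · rfl
  · have hz : (fun q : Fin m × Fin 3 =>
          (1 / 3 : ℂ) * (α q.1 * ∑ j', β q.1 j')
            - (1 / (3 * (m : ℂ))) * ∑ i', (α i' * ∑ j', β i' j')) = fun _ => (0:ℂ) := by
      funext q
      simp only [hβsum, hαdef, mul_one, Finset.sum_const, Finset.card_univ,
        Fintype.card_fin, nsmul_eq_mul]
      field_simp
      ring
    rw [hz]
    have : ‖toEuc (fun _ : Fin m × Fin 3 => (0:ℂ))‖ = 0 := by
      simp [toEuc, EuclideanSpace.norm_eq]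
    rw [this]; ring
end

section
/- Let m ≥ 1 and let ψ ∈ ℂ^m ⊗ ℂ³ be a unit vector written as ψ = Σ_{v<m} α_v e_v ⊗ (Σ_{j<3} β_{v,j} f_j) with Σ_v |α_v|² = 1 and Σ_j |β_{v,j}|² = 1 for every v. Suppose that p := ‖(I_m ⊗ u₃u₃*) ψ‖² ≥ 1/12 and that ‖((I_m − u_m u_m*) ⊗ u₃u₃*) ψ‖² ≤ 1/(200 m²). Then for every v < m, |α_v|² ≥ 1/(24 m). -/
private lemma norm_sq_toEuc' {ι : Type*} [Fintype ι] (f : ι → ℂ)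
    (x : EuclideanSpace ℂ ι) (hx : x = WithLp.toLp 2 f) :
    ‖x‖ ^ 2 = ∑ i, ‖f i‖ ^ 2 := by
  subst hx
  rw [EuclideanSpace.norm_eq, Real.sq_sqrt (by positivity)]

private lemma variance_id' (m : ℕ) (hm : 1 ≤ m) (γ : Fin m → ℂ) :
    ∑ v, Complex.normSq (γ v - (∑ w, γ w) / m) =
      (∑ v, Complex.normSq (γ v)) - Complex.normSq (∑ w, γ w) / m := by
  have hm0 : (m : ℂ) ≠ 0 := by exact_mod_cast (Nat.pos_of_ne_zero (by omega)).ne'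
  have hm0' : (m : ℝ) ≠ 0 := by exact_mod_cast (Nat.pos_of_ne_zero (by omega)).ne'
  set S : ℂ := ∑ w, γ w with hS
  have h1 : ∀ v, Complex.normSq (γ v - S / m) =
      Complex.normSq (γ v) + Complex.normSq S / m ^ 2 - 2 * (γ v * (starRingEnd ℂ) (S / m)).re := by
    intro v
    rw [Complex.normSq_sub, Complex.normSq_div]
    norm_num [Complex.normSq_natCast]
    ring
  simp only [h1]
  rw [Finset.sum_sub_distrib, Finset.sum_add_distrib, Finset.sum_const, Finset.card_univ,
    Fintype.card_fin]
  have h2 : ∑ v, 2 * (γ v * (starRingEnd ℂ) (S / m)).re = 2 * ((S * (starRingEnd ℂ) (S/m)).re) := by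
    rw [← Finset.mul_sum, ← Complex.re_sum, ← Finset.sum_mul, ← hS]
  rw [h2]
  have h3 : S * (starRingEnd ℂ) (S / m) = (Complex.normSq S / m : ℝ) := by
    have hc : S * ((starRingEnd ℂ) S) = (Complex.normSq S : ℝ) := Complex.mul_conj S
    rw [map_div₀, Complex.conj_natCast, mul_div_assoc', hc]
    push_cast
    ring
  rw [h3, Complex.ofReal_re, nsmul_eq_mul]
  field_simp
  ring

private lemma abs3_le (x y z : ℂ) (h : ‖x‖ ^ 2 + ‖y‖ ^ 2 + ‖z‖ ^ 2 = 1) :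
    ‖x + y + z‖ ^ 2 ≤ 3 := by
  have habs : ‖x + y + z‖ ≤ ‖x‖ + ‖y‖ + ‖z‖ :=
    (norm_add_le _ _).trans (by linarith [norm_add_le x y])
  nlinarith [norm_nonneg x, norm_nonneg y, norm_nonneg z,
    norm_nonneg (x + y + z), sq_nonneg (‖x‖ - ‖y‖),
    sq_nonneg (‖x‖ - ‖z‖), sq_nonneg (‖y‖ - ‖z‖)]

private lemma norm_sq_toEuc {ι : Type*} [Fintype ι] (f : ι → ℂ) :
    ‖toEuc f‖ ^ 2 = ∑ i, ‖f i‖ ^ 2 :=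
  norm_sq_toEuc' f (toEuc f) rfl

set_option maxHeartbeats 1600000 in
/-- **Lemma (Chen–Drucker, all vertices appear).**
Let `ψ = Σ_v α_v e_v ⊗ (Σ_j β_{v,j} f_j) ∈ ℂ^m ⊗ ℂ³` be a unit vector. If the
color register yields the uniform-projection outcome with probability
`p = ‖(I_m ⊗ u₃u₃*) ψ‖² ≥ 1/12` and the Uniformity-Test rejection probability
satisfies `‖((I_m − u_m u_m*) ⊗ u₃u₃*) ψ‖² ≤ 1/(200 m²)`, then every vertex
amplitude satisfies `|α_v|² ≥ 1/(24 m)`. -/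
theorem chen_drucker_all_vertices (m : ℕ) (hm : 1 ≤ m)
    (α : Fin m → ℂ) (β : Fin m → Fin 3 → ℂ)
    (hα : ∑ v, ‖α v‖ ^ 2 = 1)
    (hβ : ∀ v, ∑ j, ‖β v j‖ ^ 2 = 1)
    (hp : ‖toEuc (fun q : Fin m × Fin 3 =>
        (1 / 3 : ℂ) * (α q.1 * ∑ j', β q.1 j'))‖ ^ 2 ≥ 1 / 12)
    (hRunif : ‖toEuc (fun q : Fin m × Fin 3 =>
          (1 / 3 : ℂ) * (α q.1 * ∑ j', β q.1 j')
            - (1 / (3 * (m : ℂ))) * ∑ v', (α v' * ∑ j', β v' j'))‖ ^ 2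
      ≤ 1 / (200 * (m : ℝ) ^ 2)) :
    ∀ v : Fin m, ‖α v‖ ^ 2 ≥ 1 / (24 * (m : ℝ)) := by
  have hm0 : (m : ℂ) ≠ 0 := by exact_mod_cast (Nat.pos_of_ne_zero (by omega)).ne'
  have hmR : (1 : ℝ) ≤ (m : ℝ) := by exact_mod_cast hm
  have hmR0 : (0 : ℝ) < (m : ℝ) := by linarith
  set M : ℝ := (m : ℝ) with hM
  set γ : Fin m → ℂ := fun v => α v * ∑ j', β v j' with hγ
  set S : ℂ := ∑ w, γ w with hS
  set A : ℝ := ∑ w, ‖γ w‖ ^ 2 with hAdef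
  set V : ℝ := ∑ w, ‖γ w - S / m‖ ^ 2 with hVdef
  set t : ℝ := ‖S‖ with htdef
  -- Step 1 : A ≥ 1/4
  have hA : (1 : ℝ)/4 ≤ A := by
    rw [norm_sq_toEuc, Fintype.sum_prod_type] at hp
    have : ∀ w : Fin m, ∑ _j : Fin 3, ‖(1/3 : ℂ) * γ w‖ ^ 2
        = (1/3) * ‖γ w‖ ^ 2 := by
      intro w
      rw [Finset.sum_const, Finset.card_univ, Fintype.card_fin, norm_mul, mul_pow]
      have h13 : ‖(1/3 : ℂ)‖ = 1/3 := by norm_num [map_div₀]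
      rw [h13]; ring
    change ∑ x : Fin m, ∑ _y : Fin 3, ‖(1/3 : ℂ) * γ x‖ ^ 2 ≥ 1/12 at hp
    simp only [this] at hp
    rw [← Finset.mul_sum] at hp
    rw [hAdef]; linarith
  -- Step 2 : V ≤ 3/(200 M²)
  have hV : V ≤ 3 / (200 * M^2) := by
    rw [norm_sq_toEuc, Fintype.sum_prod_type] at hRunif
    have hterm : ∀ w : Fin m, (1 / 3 : ℂ) * γ w - (1 / (3 * (m : ℂ))) * S
        = (1/3 : ℂ) * (γ w - S / m) := by
      intro w; field_simp
    change ∑ x : Fin m, ∑ _y : Fin 3, ‖(1/3 : ℂ) * γ x - (1 / (3 * (m : ℂ))) * S‖ ^ 2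
      ≤ 1 / (200 * M ^ 2) at hRunif
    simp only [hterm] at hRunif
    have : ∀ w : Fin m, ∑ _j : Fin 3, ‖(1/3 : ℂ) * (γ w - S/m)‖ ^ 2
        = (1/3) * ‖γ w - S/m‖ ^ 2 := by
      intro w
      rw [Finset.sum_const, Finset.card_univ, Fintype.card_fin, norm_mul, mul_pow]
      have h13 : ‖(1/3 : ℂ)‖ = 1/3 := by norm_num [map_div₀]
      rw [h13]; ring
    simp only [this] at hRunif
    rw [← Finset.mul_sum] at hRunif
    have h3 : (3:ℝ)/(200*M^2) = 3 * (1/(200*M^2)) := by ring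
    rw [hVdef, h3]; linarith
  -- Step 3 : variance identity  t² = M·A − M·V
  have hvar : t^2 = M * A - M * V := by
    have hid := variance_id' m hm γ
    have habs : ∀ z : ℂ, Complex.normSq z = ‖z‖ ^ 2 := fun z =>
      (Complex.sq_norm z).symm
    simp only [habs] at hid
    rw [← hS, ← hAdef, ← hVdef, ← htdef] at hid
    have hM0 : M ≠ 0 := ne_of_gt hmR0
    have h2 : M * V = M * A - t^2 := by
      rw [hid, mul_sub, mul_div_cancel₀ _ hM0]
    linarith
  intro v
  set g : ℝ := ‖γ v‖ with hgdef
  set d : ℝ := ‖γ v - S / m‖ with hddef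
  have hg0 : 0 ≤ g := norm_nonneg _
  have hd0 : 0 ≤ d := norm_nonneg _
  have ht0 : 0 ≤ t := norm_nonneg _
  -- d² ≤ V
  have hd2 : d^2 ≤ V :=
    Finset.single_le_sum (f := fun w => ‖γ w - S / m‖ ^ 2)
      (fun i _ => by positivity) (Finset.mem_univ v)
  -- triangle : t ≤ M·g + M·d
  have htri : t ≤ M * g + M * d := by
    have h1 : ‖S / (m:ℂ)‖ ≤ g + d := by
      have he : S / (m:ℂ) = γ v - (γ v - S / m) := by ring
      rw [he, hgdef, hddef]
      exact norm_sub_le _ _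
    have h2 : ‖S / (m:ℂ)‖ = t / M := by
      rw [norm_div, Complex.norm_natCast]
    rw [h2, div_le_iff₀ hmR0] at h1
    linarith [h1]
  -- t² ≥ 47·(M/200)
  have hMV : M^2 * V ≤ 3/200 := by
    have h := mul_le_mul_of_nonneg_left hV (le_of_lt (by positivity : (0:ℝ) < M^2))
    calc M^2 * V ≤ M^2 * (3/(200*M^2)) := h
      _ = 3/200 := by field_simp
  have h1M : 1/M ≤ M := by
    rw [div_le_iff₀ hmR0]
    calc (1:ℝ) = 1*1 := by ring
      _ ≤ M*M := mul_le_mul hmR hmR zero_le_one (by linarith)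
  have ht2 : 47 * (M/200) ≤ t^2 := by
    rw [hvar]
    have hMA : M/4 ≤ M * A := by
      have := mul_le_mul_of_nonneg_left hA (le_of_lt hmR0)
      linarith
    have hMV' : M * V ≤ (3/200) * (1/M) := by
      have e : M * V = (M^2 * V) * (1/M) := by field_simp
      rw [e]
      exact mul_le_mul_of_nonneg_right hMV (by positivity)
    have h4 : (3/200) * (1/M) ≤ (3/200) * M :=
      mul_le_mul_of_nonneg_left h1M (by norm_num)
    have e3 : 47*(M/200) = M/4 - (3/200)*M := by ring
    have e4 : M * V ≤ (3/200) * M := le_trans hMV' h4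
    linarith
  -- (d·M)² ≤ 3·(M/200)
  have hdM2 : (d*M)^2 ≤ 3 * (M/200) := by
    have h1 : (d*M)^2 = M^2 * d^2 := by ring
    have h2 : M^2 * d^2 ≤ M^2 * V := mul_le_mul_of_nonneg_left hd2 (by positivity)
    have h3 : (3:ℝ)/200 ≤ 3 * (M/200) := by linarith
    linarith
  -- sqrt bookkeeping
  set s : ℝ := Real.sqrt (M/200) with hsdef
  have hs0 : 0 ≤ s := Real.sqrt_nonneg _
  have hs2 : s^2 = M/200 := Real.sq_sqrt (by positivity)
  have ht47 : Real.sqrt 47 * s ≤ t := by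
    have he : (Real.sqrt 47 * s)^2 = 47 * (M/200) := by
      rw [mul_pow, Real.sq_sqrt (by norm_num : (0:ℝ) ≤ 47), hs2]
    have hsq : (Real.sqrt 47 * s)^2 ≤ t^2 := by rw [he]; exact ht2
    exact (pow_le_pow_iff_left₀ (by positivity) ht0 (by norm_num)).mp hsq
  have hd3 : d * M ≤ Real.sqrt 3 * s := by
    have he : (Real.sqrt 3 * s)^2 = 3 * (M/200) := by
      rw [mul_pow, Real.sq_sqrt (by norm_num : (0:ℝ) ≤ 3), hs2]
    have hsq : (d*M)^2 ≤ (Real.sqrt 3 * s)^2 := by rw [he]; exact hdM2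
    exact (pow_le_pow_iff_left₀ (by positivity) (by positivity) (by norm_num)).mp hsq
  have h53 : 5 + Real.sqrt 3 ≤ Real.sqrt 47 := by
    have h1 : Real.sqrt 3 ≤ 1.9 := by
      rw [show (1.9:ℝ) = Real.sqrt (1.9^2) from (Real.sqrt_sq (by norm_num)).symm]
      exact Real.sqrt_le_sqrt (by norm_num)
    have h2 : Real.sqrt 3 ^ 2 = 3 := Real.sq_sqrt (by norm_num)
    have h5 : (5 + Real.sqrt 3)^2 ≤ Real.sqrt 47 ^ 2 := by
      rw [Real.sq_sqrt (by norm_num : (0:ℝ) ≤ 47)]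
      nlinarith [Real.sqrt_nonneg 3]
    exact (pow_le_pow_iff_left₀ (by positivity) (Real.sqrt_nonneg 47) (by norm_num)).mp h5
  -- g ≥ 5s/M  hence g² ≥ 1/(8M)
  have hg5 : 5 * s ≤ M * g := by
    have h1 : (5 + Real.sqrt 3) * s ≤ Real.sqrt 47 * s :=
      mul_le_mul_of_nonneg_right h53 hs0
    have e1 : (5 + Real.sqrt 3) * s = 5*s + Real.sqrt 3 * s := by ring
    have e2 : M * d = d * M := mul_comm M d
    linarith
  have hg2 : 1/(8*M) ≤ g^2 := by
    have h1 : (5*s)^2 ≤ (M*g)^2 := pow_le_pow_left₀ (by positivity) hg5 2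
    have e1 : (5*s)^2 = 25 * (M/200) := by rw [mul_pow, hs2]; ring
    have e2 : (M*g)^2 = M * (M * g^2) := by ring
    have e3 : (25:ℝ) * (M/200) = M * (1/8) := by ring
    have h3 : M * (1/8) ≤ M * (M * g^2) := by linarith
    have h4 : 1/8 ≤ M * g^2 := le_of_mul_le_mul_left h3 hmR0
    rw [div_le_iff₀ (by positivity)]
    have e4 : g^2 * (8*M) = 8 * (M * g^2) := by ring
    linarith
  -- Cauchy–Schwarz on β
  have hb3 : ‖∑ j, β v j‖^2 ≤ 3 := by
    have h3sum := hβ v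
    rw [Fin.sum_univ_three] at h3sum ⊢
    exact abs3_le _ _ _ h3sum
  have hgsplit : g^2 = ‖α v‖^2 * ‖∑ j', β v j'‖^2 := by
    rw [hgdef, hγ, norm_mul, mul_pow]
  have hfin : g^2 ≤ 3 * ‖α v‖^2 := by
    rw [hgsplit]
    have := mul_le_mul_of_nonneg_left hb3 (sq_nonneg (‖α v‖))
    linarith
  have hkey : 1/(24*M) = (1/3) * (1/(8*M)) := by ring
  rw [ge_iff_le, hkey]
  linarith
end
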